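/- arXiv:0812.0027 — 7 statements merged into one kernel-verified Lean document; each statement's English description precedes it below -/
import Mathlib

section
/- (Kaluznin–Krasner) If H is a normal subgroup of G with quotient K = G/H, then G embeds into the permutational wreath product H ≀ K, where K acts on itself (as the coset space H\G) by right multiplication. -/
def wAct (A G S : Type*) [Group A] [Group G] (σ : S → G → S)
    (h1 : ∀ s, σ s 1 = s) (hm : ∀ s g g', σ (σ s g) g' = σ s (g * g')) :
    G →* MulAut (S → A) where
  toFun g :=
    { toFun := fun f s => f (σ s g)
      invFun := fun f s => f (σ s g⁻¹)
      left_inv := fun f => funext fun s => by dsimp only; rw [hm, inv_mul_cancel, h1]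
      right_inv := fun f => funext fun s => by dsimp only; rw [hm, mul_inv_cancel, h1]
      map_mul' := fun f f' => rfl }
  map_one' := by
    ext f s; exact congrArg f (h1 s)
  map_mul' g g' := by
    ext f s; exact congrArg f (hm s g g').symm

/-- Kaluznin–Krasner: if `H ⊴ G` with quotient `K = G/H`, then `G` embeds in
the permutational wreath product `H ≀ K = H^K ⋊ K`, where `K` acts on itself by right
multiplication. -/
theorem kaluznin_krasner (G : Type) [Group G] (H : Subgroup G) [H.Normal] :
    ∃ φ : G →* (G ⧸ H → H)
        ⋊[wAct H (G ⧸ H) (G ⧸ H) (fun s k => s * k) (fun s => mul_one s)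
            (fun s g g' => mul_assoc s g g')] (G ⧸ H),
      Function.Injective φ := by
  classical
  set t : G ⧸ H → G := Quotient.out with ht
  have hmk : ∀ k : G ⧸ H, (QuotientGroup.mk (t k) : G ⧸ H) = k := fun k => QuotientGroup.out_eq' k
  have hmem : ∀ (k : G ⧸ H) (g : G), t k * g * (t (k * QuotientGroup.mk g))⁻¹ ∈ H := by
    intro k g
    have h1 : (QuotientGroup.mk (t k * g) : G ⧸ H) = QuotientGroup.mk (t (k * QuotientGroup.mk g)) := by
      rw [hmk, QuotientGroup.mk_mul, hmk]
    have h2 : (t k * g)⁻¹ * t (k * QuotientGroup.mk g) ∈ H := QuotientGroup.eq.mp h1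
    have h3 := (‹H.Normal›).conj_mem _ (H.inv_mem h2) (t k * g)
    have : t k * g * ((t k * g)⁻¹ * t (k * QuotientGroup.mk g))⁻¹ * (t k * g)⁻¹
        = t k * g * (t (k * QuotientGroup.mk g))⁻¹ := by group
    rwa [this] at h3
  set f : G → (G ⧸ H → H) := fun g k => ⟨t k * g * (t (k * QuotientGroup.mk g))⁻¹, hmem k g⟩ with hf
  refine ⟨{ toFun := fun g => ⟨f g, QuotientGroup.mk g⟩
            map_one' := ?_
            map_mul' := ?_ }, ?_⟩
  · refine SemidirectProduct.ext ?_ (by simp)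
    funext k
    refine Subtype.ext ?_
    simp [hf]
  · intro g g'
    refine SemidirectProduct.ext ?_ (by simp)
    funext k
    refine Subtype.ext ?_
    show t k * (g * g') * (t (k * QuotientGroup.mk (g * g')))⁻¹
      = (f g k : G) * (f g' (k * QuotientGroup.mk g) : G)
    simp only [hf, QuotientGroup.mk_mul, mul_assoc]
    group
  · intro a b h
    have hr : (QuotientGroup.mk a : G ⧸ H) = QuotientGroup.mk b := congrArg SemidirectProduct.right h
    have hl : f a = f b := congrArg SemidirectProduct.left h
    have := congrFun hl 1
    have h1 : t 1 * a * (t (1 * QuotientGroup.mk a))⁻¹ = t 1 * b * (t (1 * QuotientGroup.mk b))⁻¹ :=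
      congrArg Subtype.val this
    rw [hr] at h1
    exact mul_left_cancel (mul_right_cancel h1)
end

section
/- Let F be a free group on a set X and H a subgroup. Then there exists a Schreier transversal for H in F, i.e., a right transversal T of H consisting of reduced words over X ∪ X^{-1} that is closed under taking prefixes. -/
/-! Auxiliary: the shortlex order on lists is well-founded. -/

/-- same length and lexicographically smaller -/
def ShortQ {A : Type*} (r : A → A → Prop) (l₁ l₂ : List A) : Prop :=
  l₁.length = l₂.length ∧ List.Lex r l₁ l₂

/-- shortlex: shorter, or same length and lexicographically smaller -/
def ShortSL {A : Type*} (r : A → A → Prop) (l₁ l₂ : List A) : Prop :=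
  l₁.length < l₂.length ∨ (l₁.length = l₂.length ∧ List.Lex r l₁ l₂)

lemma shortQ_acc_cons {A : Type*} (r : A → A → Prop) (hwf : WellFounded r) (n : ℕ)
    (ih : ∀ l : List A, l.length = n → Acc (ShortQ r) l) :
    ∀ a : A, ∀ t : List A, Acc (ShortQ r) t → t.length = n → Acc (ShortQ r) (a :: t) := by
  intro a
  induction hwf.apply a with
  | intro a _ iha =>
    intro t hacc
    induction hacc with
    | intro t _ iht =>
      intro ht
      constructor
      rintro y ⟨hlen, hlex⟩
      cases hlex with
      | nil => simp at hlen
      | @cons _ s _ h =>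
        exact iht s ⟨by simpa using hlen, h⟩ (by simp at hlen; omega)
      | @rel b s _ _ h =>
        exact iha b h s (ih s (by simp at hlen; omega)) (by simp at hlen; omega)

lemma shortQ_acc {A : Type*} (r : A → A → Prop) (hwf : WellFounded r) :
    ∀ l : List A, Acc (ShortQ r) l := by
  suffices h : ∀ n, ∀ l : List A, l.length = n → Acc (ShortQ r) l from fun l => h _ l rfl
  intro n
  induction n with
  | zero =>
    intro l hl
    rw [List.length_eq_zero_iff] at hl; subst hl
    constructor
    rintro y ⟨-, hlex⟩
    cases hlex
  | succ n ih =>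
    rintro (_ | ⟨a, t⟩) hl
    · simp at hl
    · exact shortQ_acc_cons r hwf n ih a t (ih t (by simpa using hl)) (by simpa using hl)

lemma shortSL_wf {A : Type*} (r : A → A → Prop) (hwf : WellFounded r) :
    WellFounded (ShortSL r) := by
  constructor
  suffices h : ∀ n, ∀ l : List A, Acc (ShortQ r) l → l.length = n → Acc (ShortSL r) l from
    fun l => h l.length l (shortQ_acc r hwf l) rfl
  intro n
  induction n using Nat.strong_induction_on with
  | _ n ih =>
    intro l hq
    induction hq with
    | intro l _ ihq =>
      intro hl
      constructor
      rintro y (hlt | ⟨heq, hlex⟩)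
      · exact ih y.length (hl ▸ hlt) y (shortQ_acc r hwf y) rfl
      · exact ihq y ⟨heq, hlex⟩ (heq.trans hl)

lemma shortSL_total {A : Type*} (r : A → A → Prop) [IsTrichotomous A r]
    {l₁ l₂ : List A} (hne : l₁ ≠ l₂) : ShortSL r l₁ l₂ ∨ ShortSL r l₂ l₁ := by
  rcases Nat.lt_trichotomy l₁.length l₂.length with h | h | h
  · exact Or.inl (Or.inl h)
  · rcases trichotomous_of (List.Lex r) l₁ l₂ with hl | rfl | hl
    · exact Or.inl (Or.inr ⟨h, hl⟩)
    · exact absurd rfl hne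
    · exact Or.inr (Or.inr ⟨h.symm, hl⟩)
  · exact Or.inr (Or.inl h)

lemma lex_append {A : Type*} (r : A → A → Prop) (s s' : List A) {l₁ l₂ : List A}
    (h : List.Lex r l₁ l₂) :
    l₁.length = l₂.length → List.Lex r (l₁ ++ s) (l₂ ++ s') := by
  induction h with
  | nil => intro hlen; simp at hlen
  | cons h ih => intro hlen; exact List.Lex.cons (ih (by simpa using hlen))
  | rel h => intro _; exact List.Lex.rel h

/-- An infix of a reduced word is reduced. -/
lemma reduce_of_infix {X : Type} [DecidableEq X] {L₁ L₂ : List (X × Bool)}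
    (h : FreeGroup.reduce L₂ = L₂) (hinf : L₁ <:+: L₂) : FreeGroup.reduce L₁ = L₁ := by
  by_contra hne
  have hred : FreeGroup.Red L₁ (FreeGroup.reduce L₁) := FreeGroup.reduce.red
  rcases Relation.ReflTransGen.cases_head hred with heq | ⟨c, hstep, -⟩
  · exact hne heq.symm
  · cases hstep with
    | @not A B x b =>
      obtain ⟨C, D, rfl⟩ := hinf
      exact FreeGroup.reduce.not (L₂ := C ++ A) (L₃ := B ++ D) (x := x) (b := b)
        (by rw [h]; simp)

/-- every subgroup `H` of a free group `F` on `X` admits a Schreier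
transversal: a right transversal of `H` (meeting each right coset `Hw` in exactly one
element) that is closed under taking prefixes of reduced words. -/
theorem schreier_transversal_exists (X : Type) [DecidableEq X] (H : Subgroup (FreeGroup X)) :
    ∃ T : Set (FreeGroup X),
      (∀ g : FreeGroup X, ∃! t, t ∈ T ∧ g * t⁻¹ ∈ H) ∧
      (∀ t ∈ T, ∀ l : List (X × Bool), l <+: FreeGroup.toWord t → FreeGroup.mk l ∈ T) := by
  classical
  set r₀ : (X × Bool) → (X × Bool) → Prop := WellOrderingRel with hr₀
  have hwf₀ : WellFounded r₀ := (WellOrderingRel.isWellOrder).wf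
  set R : FreeGroup X → FreeGroup X → Prop :=
    fun a b => ShortSL r₀ a.toWord b.toWord with hR
  have wfR : WellFounded R := InvImage.wf _ (shortSL_wf r₀ hwf₀)
  have Rtotal : ∀ {a b : FreeGroup X}, a ≠ b → R a b ∨ R b a := by
    intro a b hne
    exact shortSL_total r₀ (fun h => hne (FreeGroup.toWord_injective h))
  -- T : minimal elements of their cosets
  refine ⟨{w | ∀ v : FreeGroup X, w * v⁻¹ ∈ H → ¬ R v w}, ?_, ?_⟩
  · intro g
    have hne : ({w | g * w⁻¹ ∈ H} : Set (FreeGroup X)).Nonempty :=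
      ⟨g, by simpa using H.one_mem⟩
    set m := wfR.min {w | g * w⁻¹ ∈ H} hne with hm
    have hmmem : g * m⁻¹ ∈ H := wfR.min_mem _ hne
    refine ⟨m, ⟨?_, hmmem⟩, ?_⟩
    · intro v hv
      have hv' : g * v⁻¹ ∈ H := by
        have := H.mul_mem hmmem hv
        simpa [mul_assoc] using this
      exact wfR.not_lt_min {w | g * w⁻¹ ∈ H} (x := v) hv'
    · rintro t ⟨htT, htH⟩
      by_contra hne'
      have htm : t * m⁻¹ ∈ H := by
        have := H.mul_mem (H.inv_mem htH) hmmem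
        simpa [mul_assoc] using this
      have hmt : m * t⁻¹ ∈ H := by
        have := H.mul_mem (H.inv_mem hmmem) htH
        simpa [mul_assoc] using this
      have hmT : ∀ v : FreeGroup X, m * v⁻¹ ∈ H → ¬ R v m := by
        intro v hv
        have hv' : g * v⁻¹ ∈ H := by
          have := H.mul_mem hmmem hv
          simpa [mul_assoc] using this
        exact wfR.not_lt_min {w | g * w⁻¹ ∈ H} (x := v) hv'
      rcases Rtotal hne' with h | h
      · exact hmT t hmt h
      · exact htT m htm h
  · intro t htT l hpre
    obtain ⟨s, hs⟩ := hpre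
    have hlred : FreeGroup.reduce l = l :=
      reduce_of_infix (FreeGroup.reduce_toWord t) ⟨[], s, by simpa using hs⟩
    have hsred : FreeGroup.reduce s = s :=
      reduce_of_infix (FreeGroup.reduce_toWord t) ⟨l, [], by simpa using hs⟩
    have hul : (FreeGroup.mk l).toWord = l := by rw [FreeGroup.toWord_mk, hlred]
    have hus : (FreeGroup.mk s).toWord = s := by rw [FreeGroup.toWord_mk, hsred]
    have ht : t = FreeGroup.mk l * FreeGroup.mk s := by
      rw [FreeGroup.mul_mk, hs, FreeGroup.mk_toWord]
    intro v hv
    intro hRv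
    -- w' := v * mk s is in the coset of t and shortlex-smaller than t : contradiction
    have hmem : t * (v * FreeGroup.mk s)⁻¹ ∈ H := by
      have : t * (v * FreeGroup.mk s)⁻¹ = FreeGroup.mk l * v⁻¹ := by
        rw [ht]; group
      rw [this]; exact hv
    refine htT (v * FreeGroup.mk s) hmem ?_
    -- now show R (v * mk s) t
    have hsub : List.Sublist (v * FreeGroup.mk s).toWord (v.toWord ++ s) := by
      have := FreeGroup.toWord_mul_sublist v (FreeGroup.mk s)
      rwa [hus] at this
    have hlen : (v * FreeGroup.mk s).toWord.length ≤ v.toWord.length + s.length := by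
      simpa using hsub.length_le
    have htw : t.toWord = l ++ s := hs.symm
    rcases hRv with hlt | ⟨heq, hlex⟩
    · -- v shorter than l
      left
      rw [hul] at hlt
      rw [htw, List.length_append]
      omega
    · rw [hul] at heq hlex
      rcases Nat.lt_or_ge (v * FreeGroup.mk s).toWord.length t.toWord.length with h | h
      · exact Or.inl h
      · right
        have hlen2 : (v * FreeGroup.mk s).toWord.length = (v.toWord ++ s).length := by
          rw [htw] at h
          simp only [List.length_append] at h ⊢
          omega
        have heq2 : (v * FreeGroup.mk s).toWord = v.toWord ++ s :=
          hsub.eq_of_length hlen2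
        constructor
        · rw [heq2, htw]; simp [heq]
        · rw [heq2, htw]
          exact lex_append r₀ s s hlex heq
end

section
/- Let F be a free group on X, H ≤ F, and T a Schreier transversal for H with w̄ denoting the representative in T of the coset Hw. Then the set B = { t x (t̄x)^{-1} : t ∈ T, x ∈ X, t x (t̄x)^{-1} ≠ 1 } freely generates H; that is, H is a free group with basis B. -/
namespace NSAux

variable {X : Type} [DecidableEq X] (H : Subgroup (FreeGroup X))

abbrev Q := Quotient (QuotientGroup.rightRel H)

/-- Right action of the free group on right cosets. -/
def act (w : FreeGroup X) : Q H → Q H :=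
  Quotient.map' (· * w) (fun a b hab => by
    have hab' : b * a⁻¹ ∈ H := (QuotientGroup.rightRel_apply).mp hab
    show QuotientGroup.rightRel H (a * w) (b * w)
    rw [QuotientGroup.rightRel_apply]
    simpa [mul_assoc] using hab')

lemma act_mk (w g : FreeGroup X) :
    act H w (Quotient.mk'' g) = Quotient.mk'' (g * w) := rfl

lemma act_one (q : Q H) : act H 1 q = q := by
  induction q using Quotient.ind
  simp [act_mk, ← Quotient.mk''_eq_mk]

lemma act_mul (u v : FreeGroup X) (q : Q H) :
    act H (u * v) q = act H v (act H u q) := by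
  induction q using Quotient.ind
  rw [← Quotient.mk''_eq_mk, act_mk, act_mk, act_mk, mul_assoc]

/-- Right action as a permutation (of the inverse, so it's covariant). -/
def mkPerm (w : FreeGroup X) : Equiv.Perm (Q H) where
  toFun := act H w⁻¹
  invFun := act H w
  left_inv q := by rw [← act_mul, inv_mul_cancel, act_one]
  right_inv q := by rw [← act_mul, mul_inv_cancel, act_one]

lemma mkPerm_symm_apply (w : FreeGroup X) (q : Q H) :
    (mkPerm H w).symm q = act H w q := rfl

def permHom : FreeGroup X →* Equiv.Perm (Q H) where
  toFun := mkPerm H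
  map_one' := by
    ext q
    simp [mkPerm, act_one]
  map_mul' u v := by
    ext q
    simp [mkPerm, Equiv.Perm.mul_apply, mul_inv_rev, act_mul]

variable (K : Type) [Group K]

/-- The action of permutations of `Q` on `Q → K`. -/
def arrAut : Equiv.Perm (Q H) →* MulAut ((Q H) → K) where
  toFun σ := MulEquiv.arrowCongr σ (MulEquiv.refl K)
  map_one' := by ext f q; simp; rfl
  map_mul' σ τ := by ext f q; rfl

/-- The free group mapped into the wreath product `(Q → K) ⋊ Perm Q`. -/
def Ψ (ψ : Q H → X → K) :
    FreeGroup X →* (((Q H) → K) ⋊[arrAut H K] Equiv.Perm (Q H)) :=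
  FreeGroup.lift (fun x => ⟨fun q => ψ q x, mkPerm H (FreeGroup.of x)⟩)

/-- The cocycle. -/
def c (ψ : Q H → X → K) (w : FreeGroup X) : Q H → K := (Ψ H K ψ w).left

lemma right_Ψ (ψ : Q H → X → K) (w : FreeGroup X) :
    (Ψ H K ψ w).right = mkPerm H w := by
  have h : SemidirectProduct.rightHom.comp (Ψ H K ψ) = permHom H := by
    apply FreeGroup.ext_hom
    intro x
    show ((Ψ H K ψ) (FreeGroup.of x)).right = mkPerm H (FreeGroup.of x)
    rw [Ψ, FreeGroup.lift_apply_of]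
  have := DFunLike.congr_fun h w
  exact this

lemma c_mul (ψ : Q H → X → K) (u v : FreeGroup X) (q : Q H) :
    c H K ψ (u * v) q = c H K ψ u q * c H K ψ v (act H u q) := by
  unfold c
  rw [map_mul, SemidirectProduct.mul_left, Pi.mul_apply]
  congr 1
  show (arrAut H K (Ψ H K ψ u).right) (Ψ H K ψ v).left q = _
  rw [right_Ψ]
  rfl

lemma c_one (ψ : Q H → X → K) (q : Q H) : c H K ψ 1 q = 1 := by
  unfold c
  rw [map_one]
  rfl

lemma c_inv (ψ : Q H → X → K) (u : FreeGroup X) (q : Q H) :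
    c H K ψ u⁻¹ (act H u q) = (c H K ψ u q)⁻¹ := by
  have h := c_mul H K ψ u u⁻¹ q
  rw [mul_inv_cancel, c_one] at h
  exact eq_inv_of_mul_eq_one_right h.symm

lemma c_of (ψ : Q H → X → K) (x : X) (q : Q H) : c H K ψ (FreeGroup.of x) q = ψ q x := by
  unfold c Ψ
  rw [FreeGroup.lift_apply_of]

section withSection

variable (s : Q H → FreeGroup X) (hs : ∀ q, Quotient.mk'' (s q) = q)

/-- The Schreier generator. -/
def gen (q : Q H) (x : X) : FreeGroup X :=
  s q * FreeGroup.of x * (s (Quotient.mk'' (s q * FreeGroup.of x)))⁻¹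

include hs in
lemma memH (a : FreeGroup X) : a * (s (Quotient.mk'' a))⁻¹ ∈ H := by
  have h1 : Quotient.mk'' (s (Quotient.mk'' a)) = (Quotient.mk'' a : Q H) := hs _
  rw [Quotient.eq''] at h1
  exact (QuotientGroup.rightRel_apply).mp h1

include hs in
lemma gen_memH (q : Q H) (x : X) : gen H s q x ∈ H := by
  have := memH H s hs (s q * FreeGroup.of x)
  simpa [gen, mul_assoc] using this

include hs in
lemma act_s (w : FreeGroup X) (q : Q H) : act H w q = Quotient.mk'' (s q * w) := by
  conv_lhs => rw [← hs q]
  rfl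

include hs in
lemma s_one (hpc : ∀ q, ∀ l : List (X × Bool),
    l <+: FreeGroup.toWord (s q) → ∃ q', s q' = FreeGroup.mk l) :
    s (Quotient.mk'' (1 : FreeGroup X)) = 1 := by
  obtain ⟨q', hq'⟩ := hpc (Quotient.mk'' (1 : FreeGroup X)) [] List.nil_prefix
  have hone : FreeGroup.mk ([] : List (X × Bool)) = (1 : FreeGroup X) := rfl
  have : q' = Quotient.mk'' (1 : FreeGroup X) := by
    rw [← hs q', hq', hone]
  rw [← this, hq', hone]

variable (hpc : ∀ q, ∀ l : List (X × Bool),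
    l <+: FreeGroup.toWord (s q) → ∃ q', s q' = FreeGroup.mk l)

include hs hpc in
/-- Schreier's lemma: the cocycle vanishes on transversal elements, provided `ψ`
vanishes on trivial generators. -/
lemma c_s (ψ : Q H → X → K) (hψ : ∀ q x, gen H s q x = 1 → ψ q x = 1) :
    ∀ (n : ℕ) (q : Q H), (FreeGroup.toWord (s q)).length ≤ n →
      c H K ψ (s q) (Quotient.mk'' (1 : FreeGroup X)) = 1 := by
  intro n
  induction n with
  | zero =>
    intro q h
    have h0 : FreeGroup.toWord (s q) = [] := List.eq_nil_of_length_eq_zero (Nat.le_zero.mp h)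
    have : s q = 1 := by
      rw [← FreeGroup.mk_toWord (x := s q), h0]; rfl
    rw [this, c_one]
  | succ n ih =>
    intro q h
    rcases List.eq_nil_or_concat (FreeGroup.toWord (s q)) with h0 | ⟨l', ⟨x, b⟩, hl⟩
    · have : s q = 1 := by rw [← FreeGroup.mk_toWord (x := s q), h0]; rfl
      rw [this, c_one]
    · rw [List.concat_eq_append] at hl
      obtain ⟨q', hq'⟩ := hpc q l' (by rw [hl]; exact ⟨[(x, b)], rfl⟩)
      have hlen : (FreeGroup.toWord (s q')).length ≤ n := by
        rw [hq', FreeGroup.toWord_mk]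
        have h1 : (FreeGroup.reduce l').length ≤ l'.length :=
          (FreeGroup.reduce.red (L := l')).length_le
        have h2 : l'.length + 1 ≤ n + 1 := by
          have := h
          rw [hl, List.length_append] at this
          simpa using this
        omega
      have hu : s q = s q' * FreeGroup.mk [(x, b)] := by
        rw [hq', FreeGroup.mul_mk, ← hl, FreeGroup.mk_toWord]
      have hact : act H (s q') (Quotient.mk'' (1 : FreeGroup X)) = q' := by
        rw [act_mk, one_mul, hs]
      cases b with
      | true =>
        have hof : FreeGroup.mk [(x, true)] = FreeGroup.of x := rfl
        rw [hu, hof, c_mul, ih q' hlen, one_mul, hact, c_of]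
        apply hψ
        unfold gen
        rw [← hof, ← hu, hs]
        simp
      | false =>
        have hof : FreeGroup.mk [(x, false)] = (FreeGroup.of x)⁻¹ := by
          have h1 : (FreeGroup.of x : FreeGroup X) = FreeGroup.mk [(x, true)] := rfl
          rw [h1, FreeGroup.inv_mk]
          rfl
        rw [hu, hof, c_mul, ih q' hlen, one_mul, hact]
        have hq'q : act H (FreeGroup.of x) q = q' := by
          rw [act_s H s hs, hu, hof, inv_mul_cancel_right, hs]
        rw [← hq'q, c_inv, c_of]
        have : ψ q x = 1 := by
          apply hψ
          unfold gen
          rw [hu, hof, inv_mul_cancel_right, hs]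
          simp
        rw [this, inv_one]

include hs in
lemma gen_closure (S : Set ↥H)
    (hS : ∀ (q : Q H) (x : X) (h : ↥H),
      (h : FreeGroup X) =
        s q * FreeGroup.of x * (s (Quotient.mk'' (s q * FreeGroup.of x)))⁻¹ →
        h ∈ Subgroup.closure S) :
    ∀ (w : FreeGroup X) (q : Q H) (h : ↥H),
      (h : FreeGroup X) = s q * w * (s (act H w q))⁻¹ → h ∈ Subgroup.closure S := by
  intro w
  induction w using FreeGroup.induction_on with
  | C1 =>
    intro q h hh
    have : h = 1 := by
      apply Subtype.ext
      rw [hh, act_one, mul_one]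
      simp
    rw [this]; exact one_mem _
  | of x =>
    intro q h hh
    apply hS q x h
    rw [hh, act_s H s hs]
  | inv_of x ih =>
    intro q h hh
    have hinv : ((h⁻¹ : ↥H) : FreeGroup X) =
        s (act H (FreeGroup.of x)⁻¹ q) * (FreeGroup.of x) *
          (s (act H (FreeGroup.of x) (act H (FreeGroup.of x)⁻¹ q)))⁻¹ := by
      rw [← act_mul, inv_mul_cancel, act_one]
      push_cast
      rw [hh]
      group
    have := ih (act H (FreeGroup.of x)⁻¹ q) h⁻¹ hinv
    simpa using inv_mem this
  | mul u v ihu ihv =>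
    intro q h hh
    have hm1 : s q * u * (s (act H u q))⁻¹ ∈ H := by
      rw [act_s H s hs, mul_assoc]
      simpa [mul_assoc] using memH H s hs (s q * u)
    have hm2 : s (act H u q) * v * (s (act H v (act H u q)))⁻¹ ∈ H := by
      rw [act_s H s hs (v), mul_assoc]
      simpa [mul_assoc] using memH H s hs (s (act H u q) * v)
    have h1 := ihu q ⟨_, hm1⟩ rfl
    have h2 := ihv (act H u q) ⟨_, hm2⟩ rfl
    have : h = ⟨_, hm1⟩ * ⟨_, hm2⟩ := by
      apply Subtype.ext
      push_cast
      rw [hh, act_mul]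
      group
    rw [this]
    exact mul_mem h1 h2

end withSection

end NSAux

/-- Nielsen–Schreier: if `T` is a Schreier transversal for `H ≤ F` (given by a
section `s` of the right coset space that is prefix-closed), then the set
`B = {t·x·(t̄x)⁻¹ ≠ 1 : t ∈ T, x ∈ X}` freely generates `H`: every map `B → K` into a group
extends uniquely to a homomorphism `H → K`. -/
theorem nielsen_schreier (X : Type) [DecidableEq X] (H : Subgroup (FreeGroup X))
    (s : Quotient (QuotientGroup.rightRel H) → FreeGroup X)
    (hs : ∀ q, Quotient.mk'' (s q) = q)
    (hpc : ∀ q, ∀ l : List (X × Bool),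
      l <+: FreeGroup.toWord (s q) → ∃ q', s q' = FreeGroup.mk l) :
    let B : Set H := {h : H | (h : FreeGroup X) ≠ 1 ∧
      ∃ (q : Quotient (QuotientGroup.rightRel H)) (x : X),
        (h : FreeGroup X) =
          s q * FreeGroup.of x * (s (Quotient.mk'' (s q * FreeGroup.of x)))⁻¹}
    ∀ (K : Type) [Group K] (φ : B → K), ∃! γ : H →* K, ∀ b : B, γ b = φ b := by
  intro B K _ φ
  classical
  set q₀ : NSAux.Q H := Quotient.mk'' (1 : FreeGroup X) with hq₀
  -- the weights on generators
  set ψ : NSAux.Q H → X → K := fun q x =>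
    if h : NSAux.gen H s q x = 1 then 1
    else φ ⟨⟨NSAux.gen H s q x, NSAux.gen_memH H s hs q x⟩, ⟨h, q, x, rfl⟩⟩ with hψdef
  have hψ : ∀ q x, NSAux.gen H s q x = 1 → ψ q x = 1 := fun q x h => dif_pos h
  -- facts
  have hactH : ∀ h : ↥H, NSAux.act H (h : FreeGroup X) q₀ = q₀ := by
    intro h
    rw [NSAux.act_mk, one_mul, hq₀, Quotient.eq'']
    rw [QuotientGroup.rightRel_apply]
    simp only [mul_inv_rev, inv_one, one_mul]; exact inv_mem h.2
  have hcs : ∀ r : NSAux.Q H, NSAux.c H K ψ (s r) q₀ = 1 := fun r =>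
    NSAux.c_s H K s hs hpc ψ hψ (FreeGroup.toWord (s r)).length r le_rfl
  -- the homomorphism
  set γ : H →* K :=
    { toFun := fun h => NSAux.c H K ψ (h : FreeGroup X) q₀
      map_one' := by simpa using NSAux.c_one H K ψ q₀
      map_mul' := by
        intro a b
        push_cast
        rw [NSAux.c_mul, hactH a] } with hγ
  have key : ∀ b : B, γ b = φ b := by
    rintro ⟨⟨b, hbH⟩, hbne, q, x, hval⟩
    have hval' : b = NSAux.gen H s q x := hval
    have hbne' : b ≠ 1 := hbne
    have hact1 : NSAux.act H (s q) q₀ = q := by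
      rw [hq₀, NSAux.act_mk, one_mul, hs]
    set q' : NSAux.Q H := Quotient.mk'' (s q * FreeGroup.of x) with hq'
    have hact2 : NSAux.act H (s q * FreeGroup.of x) q₀ = q' := by
      rw [hq₀, hq', NSAux.act_mk, one_mul]
    have hact3 : NSAux.act H (s q') q₀ = q' := by
      rw [hq₀, NSAux.act_mk, one_mul, hs]
    have hψval : ψ q x = φ ⟨⟨b, hbH⟩, ⟨hbne, q, x, hval⟩⟩ := by
      rw [hψdef]
      dsimp only
      rw [dif_neg (show ¬NSAux.gen H s q x = 1 from fun hg => hbne' (hval'.trans hg))]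
      exact congrArg φ (Subtype.ext (Subtype.ext hval'.symm))
    have hinv : NSAux.c H K ψ (s q')⁻¹ q' = 1 := by
      have h2 := NSAux.c_inv H K ψ (s q') q₀
      rw [hact3, hcs q', inv_one] at h2
      exact h2
    show NSAux.c H K ψ b q₀ = _
    conv_lhs => rw [hval', NSAux.gen, ← hq']
    rw [NSAux.c_mul, NSAux.c_mul, hcs q, one_mul, hact1,
      NSAux.c_of, hact2, hinv, mul_one]
    exact hψval
  refine ⟨γ, key, ?_⟩
  intro γ' hγ'
  have hBgen : ∀ h : ↥H, h ∈ Subgroup.closure B := by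
    intro h
    have hS : ∀ (q : NSAux.Q H) (x : X) (g : ↥H),
        (g : FreeGroup X) =
          s q * FreeGroup.of x * (s (Quotient.mk'' (s q * FreeGroup.of x)))⁻¹ →
        g ∈ Subgroup.closure B := by
      intro q x g hg
      by_cases h1 : (g : FreeGroup X) = 1
      · have : g = 1 := Subtype.ext h1
        rw [this]; exact one_mem _
      · exact Subgroup.subset_closure ⟨h1, q, x, hg⟩
    refine NSAux.gen_closure H s hs B hS (h : FreeGroup X) q₀ h ?_
    rw [hactH h, hq₀, NSAux.s_one H s hs hpc]
    simp
  apply MonoidHom.ext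
  intro h
  have hmem := hBgen h
  induction hmem using Subgroup.closure_induction with
  | mem b hb => exact (hγ' ⟨b, hb⟩).trans (key ⟨b, hb⟩).symm
  | one => simp
  | mul a b ha hb iha ihb => simp [map_mul, iha, ihb]
  | inv a ha iha => simp [map_inv, iha]
end

section
/- Let F be a free group on X, H ≤ F with Schreier transversal T, and suppose b = t x (t̄x)^{-1} ∈ H is a nontrivial Schreier generator where t = x_1⋯x_{k-1} and (t̄x)^{-1} = x_{k+1}⋯x_n are reduced words over X ∪ X^{-1} and x_k = x. Setting t_i = x̄_1⋯x_i (the representative of H x_1⋯x_i), one has t_i = x_1⋯x_i for i < k and t_i = x_n^{-1}⋯x_{i+1}^{-1} for i > k. -/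
private theorem invRev_drop {X : Type} (l : List (X × Bool)) (n : ℕ) :
    FreeGroup.invRev (l.drop n) = (FreeGroup.invRev l).take (l.length - n) := by
  simp only [FreeGroup.invRev, List.map_drop, List.reverse_drop, List.length_map]

/-- let `T` be a Schreier transversal (given by a prefix-closed section `s`)
for `H ≤ F`, and let `b = t·x·(t̄x)⁻¹ ≠ 1` be a Schreier generator, written
`b = x₁⋯x_{k-1}·x_k·x_{k+1}⋯x_n` where `x₁⋯x_{k-1}` is the reduced word of `t`, `x_k = x` and
`x_{k+1}⋯x_n` is the reduced word of `(t̄x)⁻¹`.  With `t_i` the representative of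
`H·x₁⋯x_i`, one has `t_i = x₁⋯x_i` for `i < k` and `t_i = x_n⁻¹⋯x_{i+1}⁻¹` for `i > k`. -/
theorem schreier_transversal_formulas (X : Type) [DecidableEq X] (H : Subgroup (FreeGroup X))
    (s : Quotient (QuotientGroup.rightRel H) → FreeGroup X)
    (hs : ∀ q, Quotient.mk'' (s q) = q)
    (hpc : ∀ q, ∀ l : List (X × Bool),
      l <+: FreeGroup.toWord (s q) → ∃ q', s q' = FreeGroup.mk l)
    (qt : Quotient (QuotientGroup.rightRel H)) (x : X)
    (hb : s qt * FreeGroup.of x *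
        (s (Quotient.mk'' (s qt * FreeGroup.of x)))⁻¹ ≠ 1) :
    let t := s qt
    let u := s (Quotient.mk'' (s qt * FreeGroup.of x))
    let L : List (X × Bool) := FreeGroup.toWord t ++ (x, true) :: FreeGroup.toWord u⁻¹
    let k := (FreeGroup.toWord t).length + 1
    ∀ i : ℕ,
      (i < k → s (Quotient.mk'' (FreeGroup.mk (L.take i))) = FreeGroup.mk (L.take i)) ∧
      (k < i → i ≤ L.length →
        s (Quotient.mk'' (FreeGroup.mk (L.take i))) = (FreeGroup.mk (L.drop i))⁻¹) := by
  intro t u L k i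
  have key : ∀ w : FreeGroup X, (∃ q', s q' = w) → s (Quotient.mk'' w) = w := by
    rintro w ⟨q', rfl⟩; rw [hs]
  have hmkL : FreeGroup.mk L = t * FreeGroup.of x * u⁻¹ := by
    show FreeGroup.mk (FreeGroup.toWord t ++ (x, true) :: FreeGroup.toWord u⁻¹) = _
    rw [← List.singleton_append, ← List.append_assoc, ← FreeGroup.mul_mk, ← FreeGroup.mul_mk,
      FreeGroup.mk_toWord, FreeGroup.mk_toWord]
    rfl
  have hbH : t * FreeGroup.of x * u⁻¹ ∈ H := by
    have h2 : Quotient.mk'' u = Quotient.mk'' (t * FreeGroup.of x) :=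
      hs (Quotient.mk'' (s qt * FreeGroup.of x))
    rw [Quotient.eq''] at h2
    exact QuotientGroup.rightRel_apply.mp h2
  constructor
  · intro hik
    apply key
    have hpre : L.take i = (FreeGroup.toWord t).take i :=
      List.take_append_of_le_length (Nat.lt_succ_iff.mp hik)
    rw [hpre]
    exact hpc qt _ (List.take_prefix _ _)
  · intro hki _
    have hdrop : L.drop i = (FreeGroup.toWord u⁻¹).drop (i - k) := by
      have : L = (FreeGroup.toWord t ++ [(x, true)]) ++ FreeGroup.toWord u⁻¹ := by
        simp [L]
      rw [this, List.drop_append]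
      have hlen : (FreeGroup.toWord t ++ [(x, true)]).length = k := by simp [k]
      rw [List.drop_eq_nil_iff.mpr (by omega : (FreeGroup.toWord t ++ [(x, true)]).length ≤ i)]
      rw [hlen]
      simp
    have hinv : FreeGroup.invRev (L.drop i) <+: FreeGroup.toWord u := by
      rw [hdrop, invRev_drop, ← FreeGroup.toWord_inv, inv_inv]
      exact List.take_prefix _ _
    obtain ⟨q', hq'⟩ := hpc (Quotient.mk'' (s qt * FreeGroup.of x)) _ hinv
    have hval : s (Quotient.mk'' ((FreeGroup.mk (L.drop i))⁻¹)) = (FreeGroup.mk (L.drop i))⁻¹ :=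
      key _ ⟨q', by rw [hq', FreeGroup.inv_mk]⟩
    have hq : (Quotient.mk'' (FreeGroup.mk (L.take i)) :
          Quotient (QuotientGroup.rightRel H)) =
        Quotient.mk'' ((FreeGroup.mk (L.drop i))⁻¹) := by
      rw [Quotient.eq'']
      apply QuotientGroup.rightRel_apply.mpr
      have : (FreeGroup.mk (L.drop i))⁻¹ * (FreeGroup.mk (L.take i))⁻¹ = (FreeGroup.mk L)⁻¹ := by
        rw [← mul_inv_rev, FreeGroup.mul_mk, List.take_append_drop]
      rw [this, hmkL]
      exact H.inv_mem hbH
    rw [hq, hval]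
end

section
/- Let G = ∗_{α∈A} G_α, H ≤ G, with a Kurosh system. If x ∈ G_α and H_i ⊆ H u G_α where u = α(HuG_α) is the chosen double coset representative, then y_{i,x} = α(H_i) x α(H_i x)^{-1} ∈ u G_α u^{-1} ∩ H. Conversely, every element h of u G_α u^{-1} ∩ H equals y_{Hu,x} for some x ∈ G_α. -/
open Monoid

variable {ι : Type} [DecidableEq ι] (Gf : ι → Type) [∀ i, Group (Gf i)]
  [∀ i, DecidableEq (Gf i)]

/-- The syllable length of an element of a free product (length of its normal form). -/
def syl (g : CoprodI Gf) : ℕ := (CoprodI.Word.equiv g).toList.length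

/-- The index of the last syllable of the normal form of an element of a free product. -/
def lastSyl (g : CoprodI Gf) : Option ι :=
  ((CoprodI.Word.equiv g).toList.getLast?).map Sigma.fst

/-- A Kurosh system for a subgroup `H` of the free product `G = ∗_α G_α`: for each `α`, a
right transversal `t α` of `H\G` (recorded as a coset-constant map `G → G` picking the
representative `α(Hg)` of `Hg`, with `α(H) = 1`) and a system `d α` of double coset
representatives of `H\G/G_α` (a double-coset-constant map picking `α(HgG_α)`), subject to
the axioms (i)–(v). -/
structure KuroshSystem (H : Subgroup (CoprodI Gf)) where
  t : ι → CoprodI Gf → CoprodI Gf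
  d : ι → CoprodI Gf → CoprodI Gf
  /-- `t α g` represents the right coset `Hg` -/
  t_coset : ∀ α g, g * (t α g)⁻¹ ∈ H
  /-- `t α` is constant on right cosets -/
  t_const : ∀ α g h, h ∈ H → t α (h * g) = t α g
  /-- `α(H) = 1` -/
  t_one : ∀ α, ∀ h ∈ H, t α h = 1
  /-- `d α g` lies in the double coset `HgG_α` -/
  d_coset : ∀ α g, ∃ h ∈ H, ∃ x : Gf α, d α g = h * g * CoprodI.of x
  /-- `d α` is constant on double cosets -/
  d_const : ∀ α g h (x : Gf α), h ∈ H → d α (h * g * CoprodI.of x) = d α g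
  /-- (i) if `g = α(HgG_α)` then `g = α(Hg)` -/
  ax_i : ∀ α g, t α (d α g) = d α g
  /-- (ii) `α(HgG_α)` is `1` or ends in a syllable `β ≠ α` -/
  ax_ii : ∀ α g, d α g = 1 ∨ ∃ β, β ≠ α ∧ lastSyl Gf (d α g) = some β
  /-- (iii) `H_i ⊆ HgG_α` with `g = α(HgG_α)` implies `α(H_i) ∈ gG_α` -/
  ax_iii : ∀ α g, ∀ h ∈ H, ∀ x : Gf α,
    ∃ x' : Gf α, t α (h * d α g * CoprodI.of x) = d α g * CoprodI.of x'
  /-- (iv) if `1 ≠ g = α(HgG_α)` has last syllable in `G_β` then `β(Hg) = g` -/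
  ax_iv : ∀ α g β, d α g ≠ 1 → lastSyl Gf (d α g) = some β → t β (d α g) = d α g
  /-- (v) `α(HgG_α)` has minimal syllable length in its double coset -/
  ax_v : ∀ α g, syl Gf (d α g) ≤ syl Gf g

/-- for a Kurosh system, if `x ∈ G_α` and `H_i ⊆ HuG_α` where `u = α(HuG_α)`
(so `H_i` is the coset of `w = h·u·x₀` with `h ∈ H`, `x₀ ∈ G_α`), then
`y_{i,x} = α(H_i)·x·α(H_i x)⁻¹ ∈ uG_αu⁻¹ ∩ H`; conversely every `h' ∈ uG_αu⁻¹ ∩ H` is of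
the form `y_{Hu,x}` for some `x ∈ G_α`. -/
theorem kurosh_y_conjugate {ι : Type} [DecidableEq ι] (Gf : ι → Type) [∀ i, Group (Gf i)]
    [∀ i, DecidableEq (Gf i)] (H : Subgroup (CoprodI Gf)) (ks : KuroshSystem Gf H)
    (α : ι) (g : CoprodI Gf) :
    (∀ h ∈ H, ∀ x₀ x : Gf α,
      ks.t α (h * ks.d α g * CoprodI.of x₀) * CoprodI.of x *
          (ks.t α (h * ks.d α g * CoprodI.of x₀ * CoprodI.of x))⁻¹ ∈ H ∧
        ∃ c : Gf α,
          ks.t α (h * ks.d α g * CoprodI.of x₀) * CoprodI.of x *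
              (ks.t α (h * ks.d α g * CoprodI.of x₀ * CoprodI.of x))⁻¹ =
            ks.d α g * CoprodI.of c * (ks.d α g)⁻¹) ∧
    (∀ h' ∈ H, (∃ c : Gf α, h' = ks.d α g * CoprodI.of c * (ks.d α g)⁻¹) →
      ∃ x : Gf α,
        h' = ks.t α (ks.d α g) * CoprodI.of x *
          (ks.t α (ks.d α g * CoprodI.of x))⁻¹) := by
  constructor
  · intro h hH x₀ x
    have hwx : h * ks.d α g * CoprodI.of x₀ * CoprodI.of x =
        h * ks.d α g * CoprodI.of (x₀ * x) := by
      rw [map_mul]; group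
    constructor
    · have h1 := ks.t_coset α (h * ks.d α g * CoprodI.of x₀)
      have h2 := ks.t_coset α (h * ks.d α g * CoprodI.of x₀ * CoprodI.of x)
      have key : ks.t α (h * ks.d α g * CoprodI.of x₀) * CoprodI.of x *
            (ks.t α (h * ks.d α g * CoprodI.of x₀ * CoprodI.of x))⁻¹ =
          (h * ks.d α g * CoprodI.of x₀ *
              (ks.t α (h * ks.d α g * CoprodI.of x₀))⁻¹)⁻¹ *
            (h * ks.d α g * CoprodI.of x₀ * CoprodI.of x *
              (ks.t α (h * ks.d α g * CoprodI.of x₀ * CoprodI.of x))⁻¹) := by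
        group
      rw [key]
      exact mul_mem (inv_mem h1) h2
    · obtain ⟨x₀', hx₀'⟩ := ks.ax_iii α g h hH x₀
      obtain ⟨x₁', hx₁'⟩ := ks.ax_iii α g h hH (x₀ * x)
      refine ⟨x₀' * x * x₁'⁻¹, ?_⟩
      rw [hwx, hx₀', hx₁', map_mul, map_mul, map_inv]
      group
  · rintro h' hH' ⟨c, hc⟩
    refine ⟨c, ?_⟩
    have ht : ks.t α (ks.d α g) = ks.d α g := ks.ax_i α g
    have key : ks.d α g * CoprodI.of c = h' * ks.d α g := by rw [hc]; group
    rw [ht, key, ks.t_const α _ h' hH', ht, hc]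
    group
end

section
/- Let G = ∗_{α∈A} G_α be a free product and H ≤ G. Then a Kurosh system for H in G exists: there are transversals T_α of H\G and systems D_α of double coset representatives of H\G/G_α satisfying axioms (i)–(v) of a Kurosh system. -/
open Monoid

variable {ι : Type} [DecidableEq ι] (Gf : ι → Type) [∀ i, Group (Gf i)]
  [∀ i, DecidableEq (Gf i)]

namespace Kurosh

open Monoid.CoprodI

variable {Gf}

theorem equiv_def (g : CoprodI Gf) : Word.equiv g = g • Word.empty := rfl

theorem prod_equiv (g : CoprodI Gf) : (Word.equiv g).prod = g :=
  Word.equiv.symm_apply_apply g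

theorem equiv_prod (w : Word Gf) : Word.equiv w.prod = w :=
  Word.equiv.apply_symm_apply w

theorem equiv_one : Word.equiv (1 : CoprodI Gf) = Word.empty := by
  rw [equiv_def]; exact one_smul _ _

theorem syl_one : syl Gf (1 : CoprodI Gf) = 0 := by
  simp [syl, equiv_one]

theorem lastSyl_one : lastSyl Gf (1 : CoprodI Gf) = none := by
  simp [lastSyl, equiv_one]

theorem eq_one_of_syl_eq_zero {g : CoprodI Gf} (h : syl Gf g = 0) : g = 1 := by
  have hl : (Word.equiv g).toList = [] := List.length_eq_zero_iff.1 h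
  have : Word.equiv g = Word.empty := Word.ext hl
  have := congrArg Word.prod this
  rwa [prod_equiv, Word.prod_empty] at this

theorem syl_ne_zero {g : CoprodI Gf} (h : g ≠ 1) : syl Gf g ≠ 0 :=
  fun hs => h (eq_one_of_syl_eq_zero hs)

theorem exists_lastSyl {g : CoprodI Gf} (h : g ≠ 1) : ∃ β, lastSyl Gf g = some β := by
  have hl : (Word.equiv g).toList ≠ [] := by
    intro hll
    exact h (eq_one_of_syl_eq_zero (by simp [syl, hll]))
  obtain ⟨a, ha⟩ := List.getLast?_isSome.2 hl |> Option.isSome_iff_exists.1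
  exact ⟨a.1, by simp [lastSyl, ha]⟩

/-- Appending a letter from a different summand. -/
theorem equiv_mul_of {g : CoprodI Gf} {α : ι} {x : Gf α} (hx : x ≠ 1)
    (hl : lastSyl Gf g ≠ some α) :
    (Word.equiv (g * CoprodI.of x)).toList = (Word.equiv g).toList ++ [⟨α, x⟩] := by
  set L := (Word.equiv g).toList with hL
  have hne : ∀ l ∈ L ++ [(⟨α, x⟩ : Σ i, Gf i)], Sigma.snd l ≠ 1 := by
    intro l hmem
    rcases List.mem_append.1 hmem with h1 | h1
    · exact (Word.equiv g).ne_one l h1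
    · rcases List.mem_singleton.1 h1 with rfl; exact hx
  have hch : (L ++ [(⟨α, x⟩ : Σ i, Gf i)]).IsChain (fun l l' => Sigma.fst l ≠ Sigma.fst l') := by
    rw [List.isChain_append]
    refine ⟨(Word.equiv g).chain_ne, List.isChain_singleton _, ?_⟩
    intro p hp q hq
    simp only [List.head?_cons, Option.mem_some_iff] at hq
    subst hq
    intro hpq
    apply hl
    rw [lastSyl, ← hL, Option.mem_def.1 hp]
    simpa using hpq
  refine (congrArg Word.toList (?_ : Word.equiv (g * CoprodI.of x) = ⟨L ++ [⟨α, x⟩], hne, hch⟩))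
  have hprod : Word.prod (⟨L ++ [⟨α, x⟩], hne, hch⟩ : Word Gf) = g * CoprodI.of x := by
    simp only [Word.prod, List.map_append, List.prod_append, List.map_singleton,
      List.prod_singleton]
    congr 1
    exact prod_equiv g
  rw [← hprod, equiv_prod]

theorem syl_mul_of {g : CoprodI Gf} {α : ι} {x : Gf α} (hx : x ≠ 1)
    (hl : lastSyl Gf g ≠ some α) : syl Gf (g * CoprodI.of x) = syl Gf g + 1 := by
  simp [syl, equiv_mul_of hx hl]

theorem lastSyl_mul_of {g : CoprodI Gf} {α : ι} {x : Gf α} (hx : x ≠ 1)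
    (hl : lastSyl Gf g ≠ some α) : lastSyl Gf (g * CoprodI.of x) = some α := by
  simp [lastSyl, equiv_mul_of hx hl]

/-- Stripping the last letter. -/
theorem exists_strip {g : CoprodI Gf} {α : ι} (h : lastSyl Gf g = some α) :
    ∃ (g' : CoprodI Gf) (x : Gf α), x ≠ 1 ∧ lastSyl Gf g' ≠ some α ∧
      g = g' * CoprodI.of x := by
  set L := (Word.equiv g).toList with hL
  have hLne : L ≠ [] := by
    intro hll
    rw [lastSyl, ← hL, hll] at h; simp at h
  obtain ⟨a, ha⟩ := List.getLast?_isSome.2 hLne |> Option.isSome_iff_exists.1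
  have haα : a.1 = α := by
    rw [lastSyl, ← hL, ha] at h; simpa using h
  obtain ⟨i, x⟩ := a
  subst haα
  have hdec : L = L.dropLast ++ [⟨i, x⟩] :=
    (List.dropLast_append_getLast? (l := L) ⟨i, x⟩ (Option.mem_def.2 ha)).symm
  have hsub : ∀ l ∈ L.dropLast, l ∈ L := fun l hl => List.dropLast_subset L hl
  have hne' : ∀ l ∈ L.dropLast, Sigma.snd l ≠ 1 := fun l hl =>
    (Word.equiv g).ne_one l (hsub l hl)
  have hch0 : L.IsChain (fun l l' => Sigma.fst l ≠ Sigma.fst l') := (Word.equiv g).chain_ne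
  rw [hdec] at hch0
  rw [List.isChain_append] at hch0
  obtain ⟨hch', -, hlastrel⟩ := hch0
  set W' : Word Gf := ⟨L.dropLast, hne', hch'⟩ with hW'
  refine ⟨W'.prod, x, ?_, ?_, ?_⟩
  · refine (Word.equiv g).ne_one ⟨i, x⟩ ?_
    rw [← hL, hdec]; simp
  · intro hc
    rw [lastSyl, equiv_prod] at hc
    simp only [hW'] at hc
    obtain ⟨p, hp1, hp2⟩ := Option.map_eq_some_iff.1 hc
    exact hlastrel p hp1 ⟨i, x⟩ rfl hp2
  · have h1 : g = List.prod (L.map fun l => CoprodI.of l.snd) := by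
      rw [← prod_equiv g]; rfl
    rw [h1]
    conv_lhs => rw [hdec]
    rw [List.map_append, List.prod_append]
    rfl

theorem syl_mul_of_le (g : CoprodI Gf) {α : ι} (x : Gf α) :
    syl Gf (g * CoprodI.of x) ≤ syl Gf g + 1 := by
  by_cases hx : x = 1
  · simp [hx]
  by_cases hl : lastSyl Gf g = some α
  · obtain ⟨g', y, hy, hl', rfl⟩ := exists_strip hl
    rw [mul_assoc, ← map_mul]
    by_cases hyx : y * x = 1
    · rw [hyx, map_one, mul_one]
      have := syl_mul_of hy hl'
      omega
    · rw [syl_mul_of hyx hl', syl_mul_of hy hl']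
      omega
  · rw [syl_mul_of hx hl]

set_option linter.unusedSectionVars false

variable (H : Subgroup (CoprodI Gf))

/-- The right coset `Hg` as a set. -/
def RC (g : CoprodI Gf) : Set (CoprodI Gf) := {v | v * g⁻¹ ∈ H}

/-- The double coset `H g G_α` as a set. -/
def DC (α : ι) (g : CoprodI Gf) : Set (CoprodI Gf) :=
  {v | ∃ h ∈ H, ∃ x : Gf α, v = h * g * CoprodI.of x}

variable {H}

theorem mem_RC_self (g : CoprodI Gf) : g ∈ RC H g := by simp [RC, H.one_mem]

theorem RC_eq {v g : CoprodI Gf} (h : v ∈ RC H g) : RC H v = RC H g := by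
  ext u
  simp only [RC, Set.mem_setOf_eq] at *
  constructor
  · intro hu
    have := H.mul_mem hu h
    rwa [mul_assoc, inv_mul_cancel_left] at this
  · intro hu
    have := H.mul_mem hu (H.inv_mem h)
    have he : u * g⁻¹ * (v * g⁻¹)⁻¹ = u * v⁻¹ := by group
    rwa [he] at this

theorem mem_DC_self (α : ι) (g : CoprodI Gf) : g ∈ DC H α g :=
  ⟨1, H.one_mem, 1, by simp⟩

theorem RC_subset_DC (α : ι) (g : CoprodI Gf) : RC H g ⊆ DC H α g := by
  intro v hv
  exact ⟨v * g⁻¹, hv, 1, by simp⟩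

theorem DC_eq {v g : CoprodI Gf} {α : ι} (h : v ∈ DC H α g) : DC H α v = DC H α g := by
  obtain ⟨h0, hh0, x0, rfl⟩ := h
  ext u
  constructor
  · rintro ⟨h1, hh1, x1, rfl⟩
    exact ⟨h1 * h0, H.mul_mem hh1 hh0, x0 * x1, by rw [map_mul]; group⟩
  · rintro ⟨h1, hh1, x1, rfl⟩
    refine ⟨h1 * h0⁻¹, H.mul_mem hh1 (H.inv_mem hh0), x0⁻¹ * x1, ?_⟩
    rw [map_mul, map_inv]; group

/-- Minimal syllable length in a double coset. -/
noncomputable def minlen (α : ι) (g : CoprodI Gf) : ℕ := sInf (syl Gf '' DC H α g)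

theorem minlen_le {α : ι} {g v : CoprodI Gf} (hv : v ∈ DC H α g) :
    minlen (H := H) α g ≤ syl Gf v :=
  Nat.sInf_le ⟨v, hv, rfl⟩

open Classical in
/-- Choice of an element of minimal syllable length. -/
noncomputable def minElt (S : Set (CoprodI Gf)) : CoprodI Gf :=
  if h : ∃ v, v ∈ S ∧ syl Gf v = sInf (syl Gf '' S) then h.choose else 1

theorem minElt_spec {S : Set (CoprodI Gf)} (hS : S.Nonempty) :
    minElt S ∈ S ∧ syl Gf (minElt S) = sInf (syl Gf '' S) := by
  have h : ∃ v, v ∈ S ∧ syl Gf v = sInf (syl Gf '' S) := by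
    have := Nat.sInf_mem (hS.image (syl Gf))
    obtain ⟨v, hv, hs⟩ := this
    exact ⟨v, hv, hs⟩
  rw [minElt, dif_pos h]
  exact h.choose_spec

open Classical in
noncomputable def pick (S : Set (CoprodI Gf)) : CoprodI Gf :=
  if h : S.Nonempty then h.some else 1

theorem pick_mem {S : Set (CoprodI Gf)} (h : S.Nonempty) : pick S ∈ S := by
  rw [pick, dif_pos h]; exact h.some_mem

open Classical in
/-- The canonical element of `S ∩ w·G_α`, preferring `w` itself. -/
noncomputable def phi (α : ι) (w : CoprodI Gf) (S : Set (CoprodI Gf)) : CoprodI Gf :=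
  if w ∈ S then w else pick (S ∩ {v | ∃ x : Gf α, v = w * CoprodI.of x})

theorem phi_spec {α : ι} {w : CoprodI Gf} {S : Set (CoprodI Gf)}
    (h : ∃ x : Gf α, w * CoprodI.of x ∈ S) :
    phi α w S ∈ S ∧ ∃ x : Gf α, phi α w S = w * CoprodI.of x := by
  rw [phi]
  split_ifs with hw
  · exact ⟨hw, 1, by simp⟩
  · obtain ⟨x, hx⟩ := h
    have hne : (S ∩ {v | ∃ x : Gf α, v = w * CoprodI.of x}).Nonempty :=
      ⟨w * CoprodI.of x, hx, x, rfl⟩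
    have := pick_mem hne
    exact ⟨this.1, this.2⟩

theorem ex_phi {α : ι} {v g : CoprodI Gf} (hv : v ∈ DC H α g) :
    ∃ x : Gf α, v * CoprodI.of x ∈ RC H g := by
  have : g ∈ DC H α v := (DC_eq hv) ▸ mem_DC_self α g
  obtain ⟨h0, hh0, x0, hg⟩ := this
  refine ⟨x0, ?_⟩
  have : v * CoprodI.of x0 = h0⁻¹ * g := by rw [hg]; group
  simp only [RC, Set.mem_setOf_eq, this, mul_assoc, mul_inv_cancel, mul_one]
  exact H.inv_mem hh0

noncomputable def dAux (H : Subgroup (CoprodI Gf)) : ℕ → ι → CoprodI Gf → CoprodI Gf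
  | 0, _, _ => 1
  | (n+1), α, g =>
    match lastSyl Gf (minElt (DC H α g)) with
    | none => 1
    | some β => phi β (dAux H n β (minElt (DC H α g))) (RC H (minElt (DC H α g)))

theorem dAux_succ (H : Subgroup (CoprodI Gf)) (n : ℕ) (α : ι) (g : CoprodI Gf) :
    dAux H (n+1) α g =
      match lastSyl Gf (minElt (DC H α g)) with
      | none => 1
      | some β => phi β (dAux H n β (minElt (DC H α g))) (RC H (minElt (DC H α g))) := rfl

/-- The double-coset representative function of the Kurosh system. -/
noncomputable def dK (α : ι) (g : CoprodI Gf) : CoprodI Gf :=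
  dAux H (minlen (H := H) α g) α g

theorem dAux_congr {α : ι} {g g' : CoprodI Gf} (hDC : DC H α g' = DC H α g) (n : ℕ) :
    dAux H n α g' = dAux H n α g := by
  cases n with
  | zero => rfl
  | succ n => rw [dAux_succ, dAux_succ, hDC]

theorem dK_const {α : ι} {v g : CoprodI Gf} (hv : v ∈ DC H α g) :
    dK (H := H) α v = dK (H := H) α g := by
  have hDC := DC_eq hv
  have hml : minlen (H := H) α v = minlen (H := H) α g := by rw [minlen, minlen, hDC]
  rw [dK, dK, hml, dAux_congr hDC]

theorem dK_spec (n : ℕ) : ∀ (α : ι) (g : CoprodI Gf), minlen (H := H) α g = n →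
    dK (H := H) α g ∈ DC H α g ∧ syl Gf (dK (H := H) α g) = n ∧
      (dK (H := H) α g = 1 ∨
        ∃ (β : ι) (y : Gf β), β ≠ α ∧ lastSyl Gf (dK (H := H) α g) = some β ∧ y ≠ 1 ∧
          dK (H := H) α g = dK (H := H) β (dK (H := H) α g) * CoprodI.of y ∧
          dK (H := H) α g =
            phi β (dK (H := H) β (dK (H := H) α g)) (RC H (dK (H := H) α g))) := by
  induction n using Nat.strong_induction_on with
  | _ n IH =>
  intro α g hm
  rcases n with _ | n
  · have hd : dK (H := H) α g = 1 := by rw [dK, hm]; rfl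
    have h0 : (0 : ℕ) ∈ syl Gf '' DC H α g := by
      have himg : (syl Gf '' DC H α g).Nonempty := ⟨syl Gf g, g, mem_DC_self α g, rfl⟩
      have := Nat.sInf_mem himg
      rwa [show sInf (syl Gf '' DC H α g) = 0 from hm] at this
    obtain ⟨v, hv, hsv⟩ := h0
    have hv1 : v = 1 := eq_one_of_syl_eq_zero hsv
    rw [hd]
    exact ⟨hv1 ▸ hv, syl_one, Or.inl rfl⟩
  · have hne : (DC H α g).Nonempty := ⟨g, mem_DC_self α g⟩
    obtain ⟨hu, hsu⟩ := minElt_spec hne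
    set u := minElt (DC H α g) with hu_def
    have hsu' : syl Gf u = n + 1 := by rw [hsu]; exact hm
    have hune : u ≠ 1 := fun h => by simp [h, syl_one] at hsu'
    obtain ⟨β, hβ⟩ := exists_lastSyl hune
    obtain ⟨u', x, hx, hlast', huu⟩ := exists_strip hβ
    have hsu'' : syl Gf u' = n := by
      have := syl_mul_of hx hlast'
      rw [← huu] at this; omega
    have hβα : β ≠ α := by
      rintro rfl
      obtain ⟨h0, hh0, x0, hu0⟩ := hu
      have hmem : u' ∈ DC H β g :=
        ⟨h0, hh0, x0 * x⁻¹, by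
          rw [map_mul, map_inv, ← mul_assoc]
          rw [hu0] at huu
          have : h0 * g * CoprodI.of x0 * (CoprodI.of x)⁻¹ = u' := by
            rw [huu]; group
          rw [← this]⟩
      have := minlen_le hmem
      omega
    have hminu_le : minlen (H := H) β u ≤ n := by
      have hmem : u' ∈ DC H β u :=
        ⟨1, H.one_mem, x⁻¹, by rw [map_inv, huu]; group⟩
      have := minlen_le hmem; omega
    have hminu_ge : n ≤ minlen (H := H) β u := by
      have himg : (syl Gf '' DC H β u).Nonempty := ⟨syl Gf u, u, mem_DC_self β u, rfl⟩
      apply le_csInf himg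
      rintro k ⟨v, hv, rfl⟩
      obtain ⟨h1, hh1, y, rfl⟩ := hv
      obtain ⟨h0, hh0, x0, hu0⟩ := hu
      have hmem : h1 * u ∈ DC H α g :=
        ⟨h1 * h0, H.mul_mem hh1 hh0, x0, by rw [hu0]; group⟩
      have h2 : h1 * u = (h1 * u * CoprodI.of y) * CoprodI.of y⁻¹ := by
        rw [map_inv]; group
      have h3 := minlen_le hmem
      rw [h2] at h3
      have h4 := syl_mul_of_le (h1 * u * CoprodI.of y) y⁻¹
      omega
    have hminu : minlen (H := H) β u = n := le_antisymm hminu_le hminu_ge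
    obtain ⟨hw1, hw2, hw3⟩ := IH n (by omega) β u hminu
    set w := dK (H := H) β u with hw_def
    have hwlast : lastSyl Gf w ≠ some β := by
      rcases hw3 with h1 | ⟨γ, y', hγ, hγl, _⟩
      · rw [h1, lastSyl_one]; simp
      · rw [hγl]; simpa using hγ
    have hd : dK (H := H) α g = phi β w (RC H u) := by
      rw [dK, hm, dAux_succ, ← hu_def, hβ]
      show phi β (dAux H n β u) (RC H u) = _
      rw [hw_def, dK, hminu]
    have hwnot : w ∉ RC H u := by
      intro hmem
      have hwdc : w ∈ DC H α g := (DC_eq hu) ▸ RC_subset_DC α u hmem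
      have := minlen_le hwdc
      rw [hw2] at this; omega
    obtain ⟨hsmem, x1, hs1⟩ := phi_spec (ex_phi hw1)
    set s := phi β w (RC H u) with hs_def
    have hx1ne : x1 ≠ 1 := by
      rintro rfl
      rw [map_one, mul_one] at hs1
      exact hwnot (hs1 ▸ hsmem)
    have hsyl_s : syl Gf s = n + 1 := by rw [hs1, syl_mul_of hx1ne hwlast, hw2]
    have hlast_s : lastSyl Gf s = some β := by rw [hs1]; exact lastSyl_mul_of hx1ne hwlast
    have hsDC : s ∈ DC H α g := (DC_eq hu) ▸ RC_subset_DC α u hsmem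
    have hdβs : dK (H := H) β s = w := by
      have : s ∈ DC H β u := RC_subset_DC β u hsmem
      rw [dK_const this]
    have hRCs : RC H s = RC H u := RC_eq hsmem
    rw [hd]
    exact ⟨hsDC, hsyl_s,
      Or.inr ⟨β, x1, hβα, hlast_s, hx1ne, by rw [hdβs]; exact hs1, by rw [hdβs, hRCs]⟩⟩

/-- The set of "special" elements for index `β`: nontrivial double coset representatives
whose last syllable lies in `G_β`. -/
def SpecSet (H : Subgroup (CoprodI Gf)) (β : ι) : Set (CoprodI Gf) :=
  {s | s ≠ 1 ∧ lastSyl Gf s = some β ∧ ∃ γ g, γ ≠ β ∧ s = dK (H := H) γ g}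

theorem spec_props {β : ι} {s : CoprodI Gf} (hs : s ∈ SpecSet H β) :
    (∃ y : Gf β, y ≠ 1 ∧ s = dK (H := H) β s * CoprodI.of y) ∧
    s = phi β (dK (H := H) β s) (RC H s) ∧
    ∀ v ∈ RC H s, syl Gf s ≤ syl Gf v := by
  obtain ⟨hs1, hs2, γ, g, hγ, hseq⟩ := hs
  obtain ⟨hd1, hd2, hd3⟩ := dK_spec (H := H) (minlen (H := H) γ g) γ g rfl
  rw [← hseq] at hd1 hd2 hd3
  rcases hd3 with h1 | ⟨β', y', hβ', hl', hy', heq', hphi'⟩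
  · exact absurd h1 hs1
  · have hββ : β' = β := by
      rw [hl'] at hs2; injection hs2
    subst hββ
    refine ⟨⟨y', hy', heq'⟩, hphi', ?_⟩
    intro v hv
    have hvDC : v ∈ DC H γ g := by
      have h2 : v ∈ DC H γ s := RC_subset_DC γ s hv
      rwa [DC_eq hd1] at h2
    have h3 := minlen_le hvDC
    omega

theorem spec_unique {β : ι} {s1 s2 : CoprodI Gf} (h1 : s1 ∈ SpecSet H β)
    (h2 : s2 ∈ SpecSet H β) (h : s2 ∈ RC H s1) : s1 = s2 := by
  have hRC : RC H s2 = RC H s1 := RC_eq h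
  have hd : dK (H := H) β s2 = dK (H := H) β s1 := dK_const (RC_subset_DC β s1 h)
  have e1 := (spec_props h1).2.1
  have e2 := (spec_props h2).2.1
  rw [e1, e2, hd, hRC]

open Classical in
/-- The transversal function of the Kurosh system. -/
noncomputable def tK (α : ι) (g : CoprodI Gf) : CoprodI Gf :=
  if (RC H g ∩ SpecSet H α).Nonempty then pick (RC H g ∩ SpecSet H α)
  else phi α (dK (H := H) α g) (RC H g)

theorem tK_mem (α : ι) (g : CoprodI Gf) : tK (H := H) α g ∈ RC H g := by
  rw [tK]
  split_ifs with h
  · exact (pick_mem h).1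
  · exact (phi_spec (ex_phi (dK_spec (H := H) (minlen (H := H) α g) α g rfl).1)).1

theorem tK_congr {α : ι} {g g' : CoprodI Gf} (h : RC H g' = RC H g) :
    tK (H := H) α g' = tK (H := H) α g := by
  have hg' : g' ∈ RC H g := h ▸ mem_RC_self g'
  have hd : dK (H := H) α g' = dK (H := H) α g := dK_const (RC_subset_DC α g hg')
  rw [tK, tK, h, hd]

end Kurosh

open Kurosh in
/-- Kurosh systems exist for any subgroup of a free product. -/
theorem kurosh_system_exists {ι : Type} [DecidableEq ι] (Gf : ι → Type) [∀ i, Group (Gf i)]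
    [∀ i, DecidableEq (Gf i)] (H : Subgroup (CoprodI Gf)) :
    Nonempty (KuroshSystem Gf H) := by
  classical
  refine ⟨⟨tK (H := H), dK (H := H), ?_, ?_, ?_, ?_, ?_, ?_, ?_, ?_, ?_, ?_⟩⟩
  · -- t_coset
    intro α g
    have h1 := tK_mem (H := H) α g
    have h2 := H.inv_mem h1
    rwa [mul_inv_rev, inv_inv] at h2
  · -- t_const
    intro α g h hh
    apply tK_congr
    apply RC_eq
    show h * g * g⁻¹ ∈ H
    rwa [mul_inv_cancel_right]
  · -- t_one
    intro α h hh
    have h1 : (1 : CoprodI Gf) ∈ RC H h := by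
      show 1 * h⁻¹ ∈ H
      rw [one_mul]; exact H.inv_mem hh
    rw [tK]
    split_ifs with hsp
    · exfalso
      obtain ⟨s, hsRC, hsSpec⟩ := hsp
      have hmin := (spec_props hsSpec).2.2
      have h2 : (1 : CoprodI Gf) ∈ RC H s := (RC_eq hsRC) ▸ h1
      have h3 := hmin 1 h2
      rw [syl_one] at h3
      exact hsSpec.1 (eq_one_of_syl_eq_zero (Nat.le_zero.1 h3))
    · have hdk : dK (H := H) α h = 1 := by
        have h2 : (1 : CoprodI Gf) ∈ DC H α h :=
          ⟨h⁻¹, H.inv_mem hh, 1, by simp⟩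
        have h3 := minlen_le h2
        rw [syl_one] at h3
        rw [dK, Nat.le_zero.1 h3]
        rfl
      rw [hdk, phi, if_pos h1]
  · -- d_coset
    exact fun α g => (dK_spec (H := H) (minlen (H := H) α g) α g rfl).1
  · -- d_const
    intro α g h x hh
    exact dK_const ⟨h, hh, x, rfl⟩
  · -- ax_i
    intro α g
    have hvDC := (dK_spec (H := H) (minlen (H := H) α g) α g rfl).1
    have spec3 := (dK_spec (H := H) (minlen (H := H) α g) α g rfl).2.2
    have hvlast : lastSyl Gf (dK (H := H) α g) ≠ some α := by
      rcases spec3 with h1 | ⟨β', y', hβ', hl', _⟩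
      · rw [h1, lastSyl_one]; simp
      · rw [hl']; simpa using hβ'
    have hv : dK (H := H) α (dK (H := H) α g) = dK (H := H) α g := dK_const hvDC
    rw [tK]
    split_ifs with hsp
    · exfalso
      obtain ⟨s, hsRC, hsSpec⟩ := hsp
      obtain ⟨⟨y, hy, hsy⟩, -, hmin⟩ := spec_props hsSpec
      have hdks : dK (H := H) α s = dK (H := H) α g := by
        have h2 : s ∈ DC H α (dK (H := H) α g) :=
          RC_subset_DC α (dK (H := H) α g) hsRC
        rw [DC_eq hvDC] at h2
        exact dK_const h2
      rw [hdks] at hsy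
      have hsyl : syl Gf s = syl Gf (dK (H := H) α g) + 1 := by
        rw [hsy]; exact syl_mul_of hy hvlast
      have hvRC : dK (H := H) α g ∈ RC H s :=
        (RC_eq hsRC) ▸ mem_RC_self (dK (H := H) α g)
      have := hmin _ hvRC
      omega
    · rw [hv, phi, if_pos (mem_RC_self (dK (H := H) α g))]
  · -- ax_ii
    intro α g
    rcases (dK_spec (H := H) (minlen (H := H) α g) α g rfl).2.2 with h1 | ⟨β, y, hβ, hl, _⟩
    · exact Or.inl h1
    · exact Or.inr ⟨β, hβ, hl⟩
  · -- ax_iii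
    intro α g h hh x
    have hg0 : h * dK (H := H) α g * CoprodI.of x ∈ DC H α (dK (H := H) α g) := ⟨h, hh, x, rfl⟩
    have hdg0 : dK (H := H) α (h * dK (H := H) α g * CoprodI.of x) = dK (H := H) α g := by
      rw [dK_const hg0]
      exact dK_const (dK_spec (H := H) (minlen (H := H) α g) α g rfl).1
    rw [tK]
    split_ifs with hsp
    · have hps := pick_mem hsp
      obtain ⟨⟨y, hy, hsy⟩, -, -⟩ := spec_props hps.2
      have hdks : dK (H := H) α (pick (RC H (h * dK (H := H) α g * CoprodI.of x) ∩
          SpecSet H α)) = dK (H := H) α g := by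
        have h2 := RC_subset_DC α (h * dK (H := H) α g * CoprodI.of x) hps.1
        rw [dK_const h2, hdg0]
      refine ⟨y, ?_⟩
      conv_rhs => rw [← hdks]
      exact hsy
    · obtain ⟨-, x', hx'⟩ := phi_spec (ex_phi
        (dK_spec (H := H) (minlen (H := H) α (h * dK (H := H) α g * CoprodI.of x)) α
          (h * dK (H := H) α g * CoprodI.of x) rfl).1)
      refine ⟨x', ?_⟩
      rw [hx', hdg0]
  · -- ax_iv
    intro α g β hne hlast
    rcases (dK_spec (H := H) (minlen (H := H) α g) α g rfl).2.2 with h1 | ⟨β', y, hβ', hl', _⟩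
    · exact absurd h1 hne
    · have hββ : β' = β := by rw [hl'] at hlast; injection hlast
      have hvSpec : dK (H := H) α g ∈ SpecSet H β :=
        ⟨hne, hlast, α, g, hββ ▸ hβ'.symm, rfl⟩
      rw [tK]
      have hsp : (RC H (dK (H := H) α g) ∩ SpecSet H β).Nonempty :=
        ⟨dK (H := H) α g, mem_RC_self _, hvSpec⟩
      rw [if_pos hsp]
      have hp := pick_mem hsp
      exact (spec_unique hvSpec hp.2 hp.1).symm
  · -- ax_v
    intro α g
    rw [(dK_spec (H := H) (minlen (H := H) α g) α g rfl).2.1]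
    exact minlen_le (mem_DC_self α g)
end

section
/- (Kurosh Subgroup Theorem) Let G = ∗_{α∈A} G_α be a free product of groups and H ≤ G. Given a Kurosh system {D_α, T_α : α ∈ A} for H, set z_{i,α} = α(H_i)·α₀(H_i)^{-1} for a fixed index α₀, Z = {z_{i,α} ≠ 1}, and F = ⟨Z⟩. Then H is the free product H = ∗_{α∈A} [ ∗_{u∈D_α} (u G_α u^{-1} ∩ H) ] ∗ F, and F is a free group with basis Z. -/
open Monoid

variable {ι : Type} [DecidableEq ι] (Gf : ι → Type) [∀ i, Group (Gf i)]
  [∀ i, DecidableEq (Gf i)]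

set_option linter.unusedSectionVars false

variable {Gf}

lemma prod_equiv (g : CoprodI Gf) : (CoprodI.Word.equiv g).prod = g :=
  CoprodI.Word.equiv.symm_apply_apply g

lemma equiv_prod (w : CoprodI.Word Gf) : CoprodI.Word.equiv w.prod = w :=
  CoprodI.Word.equiv.apply_symm_apply w

lemma lastSyl_one : lastSyl Gf (1 : CoprodI Gf) = none := by
  have : CoprodI.Word.equiv (1 : CoprodI Gf) = CoprodI.Word.empty := by
    have := equiv_prod (CoprodI.Word.empty : CoprodI.Word Gf)
    rwa [CoprodI.Word.prod_empty] at this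
  simp [lastSyl, this, CoprodI.Word.empty]

lemma syl_eq_zero {g : CoprodI Gf} (h : syl Gf g = 0) : g = 1 := by
  have h0 : (CoprodI.Word.equiv g).toList = [] := List.length_eq_zero_iff.mp h
  have : CoprodI.Word.equiv g = CoprodI.Word.empty := CoprodI.Word.ext h0
  have := congrArg CoprodI.Word.prod this
  rwa [prod_equiv, CoprodI.Word.prod_empty] at this

lemma word_prod_eq (w : CoprodI.Word Gf) :
    w.prod = (w.toList.map fun l => (CoprodI.of l.snd : CoprodI Gf)).prod := rfl

/-- appending a letter to an element not ending in that index -/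
lemma equiv_mul_of {v : CoprodI Gf} {β : ι} {x : Gf β} (hx : x ≠ 1)
    (hv : lastSyl Gf v ≠ some β) :
    (CoprodI.Word.equiv (v * CoprodI.of x)).toList
      = (CoprodI.Word.equiv v).toList ++ [⟨β, x⟩] := by
  set L := (CoprodI.Word.equiv v).toList with hL
  set a₀ : (i : ι) × Gf i := ⟨β, x⟩ with ha₀
  have hne : ∀ l ∈ L ++ [a₀], Sigma.snd l ≠ 1 := by
    intro l hl
    rcases List.mem_append.mp hl with h | h
    · exact (CoprodI.Word.equiv v).ne_one l h
    · have h' : l = a₀ := List.mem_singleton.mp h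
      subst h'; exact hx
  have hchain : (L ++ [a₀]).Chain' fun l l' => Sigma.fst l ≠ Sigma.fst l' := by
    refine List.isChain_append.2 ⟨(CoprodI.Word.equiv v).chain_ne, List.isChain_singleton _, ?_⟩
    intro a ha b hb
    have hb' : b = a₀ := by simpa using hb.symm
    subst hb'
    intro hab
    apply hv
    unfold lastSyl
    rw [← hL, ha]
    simp [hab, ha₀]
  set w' : CoprodI.Word Gf := ⟨L ++ [a₀], hne, hchain⟩ with hw'
  have hprod : w'.prod = v * CoprodI.of x := by
    rw [word_prod_eq]
    simp only [hw', List.map_append, List.prod_append, List.map_singleton,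
      List.prod_singleton]
    congr 1
    exact (word_prod_eq (CoprodI.Word.equiv v)).symm.trans (prod_equiv v)
  have := congrArg CoprodI.Word.equiv hprod
  rw [equiv_prod] at this
  rw [← this]

lemma syl_mul_of {v : CoprodI Gf} {β : ι} {x : Gf β} (hx : x ≠ 1)
    (hv : lastSyl Gf v ≠ some β) :
    syl Gf (v * CoprodI.of x) = syl Gf v + 1 := by
  unfold syl
  rw [equiv_mul_of hx hv, List.length_append, List.length_singleton]

lemma lastSyl_mul_of {v : CoprodI Gf} {β : ι} {x : Gf β} (hx : x ≠ 1)
    (hv : lastSyl Gf v ≠ some β) :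
    lastSyl Gf (v * CoprodI.of x) = some β := by
  unfold lastSyl
  rw [equiv_mul_of hx hv, List.getLast?_concat]
  rfl

/-- peeling the last letter off a nontrivial element -/
lemma exists_decomp {g : CoprodI Gf} (hg : g ≠ 1) :
    ∃ (β : ι) (x : Gf β) (g' : CoprodI Gf), g = g' * CoprodI.of x ∧ syl Gf g' + 1 = syl Gf g := by
  set L := (CoprodI.Word.equiv g).toList with hL
  have hLne : L ≠ [] := by
    intro h0
    exact hg (syl_eq_zero (by simp [syl, ← hL, h0]))
  obtain ⟨a, hlast⟩ : ∃ a, L.getLast hLne = a := ⟨_, rfl⟩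
  have hsplit : L.dropLast ++ [a] = L := by rw [← hlast]; exact List.dropLast_append_getLast hLne
  have hne : ∀ l ∈ L.dropLast, Sigma.snd l ≠ 1 := by
    intro l hl
    exact (CoprodI.Word.equiv g).ne_one l (List.dropLast_sublist L |>.mem hl)
  have hchain : L.dropLast.Chain' fun l l' => Sigma.fst l ≠ Sigma.fst l' := by
    have h3 := (CoprodI.Word.equiv g).chain_ne
    rw [← hL, ← hsplit] at h3
    exact (List.isChain_append.1 h3).1
  set w' : CoprodI.Word Gf := ⟨L.dropLast, hne, hchain⟩ with hw'
  refine ⟨a.1, a.2, w'.prod, ?_, ?_⟩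
  · have : g = (CoprodI.Word.equiv g).prod := (prod_equiv g).symm
    rw [this, word_prod_eq, ← hL, ← hsplit]
    rw [word_prod_eq]
    simp [hw']
  · have h1 : syl Gf w'.prod = L.dropLast.length := by
      unfold syl; rw [equiv_prod]
    have h2 : syl Gf g = L.length := rfl
    rw [h1, h2, ← hsplit, List.length_append, List.length_singleton,
      List.dropLast_concat]

namespace KuroshSystem

variable {H : Subgroup (CoprodI Gf)} (ks : KuroshSystem Gf H)

lemma t_memH (α : ι) (g : CoprodI Gf) : ks.t α g * g⁻¹ ∈ H := by
  have := ks.t_coset α g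
  simpa using inv_mem this

lemma t_idem (α : ι) (g : CoprodI Gf) : ks.t α (ks.t α g) = ks.t α g := by
  have h1 : ks.t α g = (ks.t α g * g⁻¹) * g := by group
  rw [h1, ks.t_const α g _ (ks.t_memH α g), ← h1]

lemma t_t (β α : ι) (g : CoprodI Gf) : ks.t β (ks.t α g) = ks.t β g := by
  have h1 : ks.t α g = (ks.t α g * g⁻¹) * g := by group
  rw [h1, ks.t_const β g _ (ks.t_memH α g)]

lemma d_mul_of (α : ι) (g : CoprodI Gf) (x : Gf α) :
    ks.d α (g * CoprodI.of x) = ks.d α g := by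
  have := ks.d_const α g 1 x (one_mem H)
  rwa [one_mul] at this

lemma d_mul_left (α : ι) (g h : CoprodI Gf) (hh : h ∈ H) :
    ks.d α (h * g) = ks.d α g := by
  have := ks.d_const α g h 1 hh
  rwa [map_one, mul_one] at this

lemma d_idem (α : ι) (g : CoprodI Gf) : ks.d α (ks.d α g) = ks.d α g := by
  obtain ⟨h, hh, x, hd⟩ := ks.d_coset α g
  rw [hd, ks.d_const α g h x hh, ← hd]

lemma t_eq_d_mul (α : ι) (k : CoprodI Gf) :
    ∃ x' : Gf α, ks.t α k = ks.d α k * CoprodI.of x' := by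
  obtain ⟨h, hh, y, hd⟩ := ks.d_coset α k
  have hk : k = h⁻¹ * (ks.d α k * CoprodI.of y⁻¹) := by
    rw [map_inv, hd]; group
  obtain ⟨x', hx'⟩ := ks.ax_iii α k 1 (one_mem H) y⁻¹
  rw [one_mul] at hx'
  refine ⟨x', ?_⟩
  calc ks.t α k = ks.t α (h⁻¹ * (ks.d α k * CoprodI.of y⁻¹)) := by rw [← hk]
    _ = ks.t α (ks.d α k * CoprodI.of y⁻¹) := ks.t_const α _ _ (inv_mem hh)
    _ = ks.d α k * CoprodI.of x' := hx'

lemma w_memH (α : ι) (g : CoprodI Gf) (x : Gf α) :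
    ks.t α g * CoprodI.of x * (ks.t α (g * CoprodI.of x))⁻¹ ∈ H := by
  have h1 : ks.t α g * CoprodI.of x * (ks.t α (g * CoprodI.of x))⁻¹
      = (ks.t α g * g⁻¹) * ((g * CoprodI.of x) * (ks.t α (g * CoprodI.of x))⁻¹) := by group
  rw [h1]
  exact mul_mem (ks.t_memH α g) (ks.t_coset α _)

lemma w_mem (α : ι) (g : CoprodI Gf) (x : Gf α) :
    ks.t α g * CoprodI.of x * (ks.t α (g * CoprodI.of x))⁻¹ ∈
      ((CoprodI.of : Gf α →* CoprodI Gf).range.map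
        (MulAut.conj (ks.d α g)).toMonoidHom) ⊓ H := by
  rw [Subgroup.mem_inf]
  refine ⟨?_, ks.w_memH α g x⟩
  obtain ⟨x₀, h₀⟩ := ks.t_eq_d_mul α g
  obtain ⟨x₂, h₂⟩ := ks.t_eq_d_mul α (g * CoprodI.of x)
  rw [ks.d_mul_of α g x] at h₂
  refine ⟨CoprodI.of (x₀ * x * x₂⁻¹), ⟨x₀ * x * x₂⁻¹, rfl⟩, ?_⟩
  show MulAut.conj (ks.d α g) (CoprodI.of (x₀ * x * x₂⁻¹)) = _
  rw [MulAut.conj_apply, h₀, h₂, map_mul, map_mul, map_inv]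
  group

lemma d_not_end (α : ι) (g : CoprodI Gf) : lastSyl Gf (ks.d α g) ≠ some α := by
  rcases ks.ax_ii α g with h1 | ⟨β, hβ, hβ2⟩
  · rw [h1, lastSyl_one]; simp
  · rw [hβ2]; simpa using hβ

end KuroshSystem

section Construction

open KuroshSystem

variable (K : Type) [Group K]

/-- right translation action of the free product on functions to `K` -/
def rAct : CoprodI Gf →* MulAut (CoprodI Gf → K) where
  toFun g :=
    { toFun := fun f k => f (k * g)
      invFun := fun f k => f (k * g⁻¹)
      left_inv := fun f => funext fun k => by
        show f (k * g⁻¹ * g) = f k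
        rw [mul_assoc]; simp
      right_inv := fun f => funext fun k => by
        show f (k * g * g⁻¹) = f k
        rw [mul_assoc]; simp
      map_mul' := fun f f' => rfl }
  map_one' := by
    apply MulEquiv.ext; intro f; funext k; simp
  map_mul' g g' := by
    apply MulEquiv.ext; intro f; funext k
    show f (k * (g * g')) = _
    rw [MulAut.mul_apply]
    show _ = f (k * g * g')
    rw [mul_assoc]

lemma rAct_apply (g : CoprodI Gf) (f : CoprodI Gf → K) (k : CoprodI Gf) :
    rAct K g f k = f (k * g) := rfl

variable {K}
variable {H : Subgroup (CoprodI Gf)} (ks : KuroshSystem Gf H) (α₀ : ι)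
  (ψ : ∀ (α : ι) (u : Set.range (ks.d α)),
      ↥(((CoprodI.of : Gf α →* CoprodI Gf).range.map
            (MulAut.conj (u : CoprodI Gf)).toMonoidHom) ⊓ H) →* K)
  (ζ : {z : CoprodI Gf //
      z ≠ 1 ∧ ∃ (α : ι) (g : CoprodI Gf), z = ks.t α g * (ks.t α₀ g)⁻¹} → K)

def uu (α : ι) (g : CoprodI Gf) : Set.range (ks.d α) := ⟨ks.d α g, ⟨g, rfl⟩⟩

lemma psi_congr {α : ι} {u v : Set.range (ks.d α)} (huv : u = v)
    {a : ↥(((CoprodI.of : Gf α →* CoprodI Gf).range.map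
            (MulAut.conj (u : CoprodI Gf)).toMonoidHom) ⊓ H)}
    {b : ↥(((CoprodI.of : Gf α →* CoprodI Gf).range.map
            (MulAut.conj (v : CoprodI Gf)).toMonoidHom) ⊓ H)}
    (hab : (a : CoprodI Gf) = (b : CoprodI Gf)) : ψ α u a = ψ α v b := by
  subst huv
  exact congrArg (ψ α u) (Subtype.ext hab)

def pw (α : ι) (g : CoprodI Gf) (x : Gf α) : K :=
  ψ α (uu ks α g) ⟨ks.t α g * CoprodI.of x * (ks.t α (g * CoprodI.of x))⁻¹, ks.w_mem α g x⟩

lemma pw_one (α : ι) (g : CoprodI Gf) : pw ks ψ α g 1 = 1 := by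
  unfold pw
  have h1 : (⟨ks.t α g * CoprodI.of (1 : Gf α) * (ks.t α (g * CoprodI.of (1 : Gf α)))⁻¹,
      ks.w_mem α g 1⟩ : ↥(((CoprodI.of : Gf α →* CoprodI Gf).range.map
            (MulAut.conj ((uu ks α g : Set.range (ks.d α)) : CoprodI Gf)).toMonoidHom) ⊓ H)) = 1 := by
    apply Subtype.ext
    show ks.t α g * CoprodI.of (1 : Gf α) * (ks.t α (g * CoprodI.of (1 : Gf α)))⁻¹ = 1
    rw [map_one, mul_one, mul_one]
    group
  rw [h1, map_one]

lemma pw_mul (α : ι) (g : CoprodI Gf) (x x' : Gf α) :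
    pw ks ψ α g x * pw ks ψ α (g * CoprodI.of x) x' = pw ks ψ α g (x * x') := by
  unfold pw
  have e3 : uu ks α (g * CoprodI.of x) = uu ks α g := Subtype.ext (ks.d_mul_of α g x)
  rw [psi_congr ks ψ e3
    (b := ⟨ks.t α (g * CoprodI.of x) * CoprodI.of x' *
        (ks.t α (g * CoprodI.of x * CoprodI.of x'))⁻¹,
        by have hw := ks.w_mem α (g * CoprodI.of x) x'
           rwa [ks.d_mul_of α g x] at hw⟩) rfl,
    ← map_mul]
  apply congrArg
  apply Subtype.ext
  push_cast
  rw [map_mul, ← mul_assoc]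
  group

noncomputable def zeta' : CoprodI Gf → K := fun z =>
  letI : Decidable (z ≠ 1 ∧ ∃ (α : ι) (g : CoprodI Gf), z = ks.t α g * (ks.t α₀ g)⁻¹) :=
    Classical.propDecidable _
  if h : z ≠ 1 ∧ ∃ (α : ι) (g : CoprodI Gf), z = ks.t α g * (ks.t α₀ g)⁻¹ then ζ ⟨z, h⟩ else 1

lemma zeta'_one : zeta' ks α₀ ζ 1 = 1 := by
  unfold zeta'
  rw [dif_neg]
  simp

noncomputable def th (α : ι) (g : CoprodI Gf) : K := zeta' ks α₀ ζ (ks.t α g * (ks.t α₀ g)⁻¹)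

lemma th_mul_left (α : ι) (g h : CoprodI Gf) (hh : h ∈ H) :
    th ks α₀ ζ α (h * g) = th ks α₀ ζ α g := by
  unfold th
  rw [ks.t_const α g h hh, ks.t_const α₀ g h hh]

noncomputable def cc (α : ι) (g : CoprodI Gf) (x : Gf α) : K :=
  (th ks α₀ ζ α g)⁻¹ * pw ks ψ α g x * th ks α₀ ζ α (g * CoprodI.of x)

lemma cc_one (α : ι) (g : CoprodI Gf) : cc ks α₀ ψ ζ α g 1 = 1 := by
  unfold cc
  rw [pw_one, map_one, mul_one]
  group

lemma cc_mul (α : ι) (g : CoprodI Gf) (x x' : Gf α) :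
    cc ks α₀ ψ ζ α g (x * x') =
      cc ks α₀ ψ ζ α g x * cc ks α₀ ψ ζ α (g * CoprodI.of x) x' := by
  unfold cc
  rw [← pw_mul,
    show g * CoprodI.of (x * x') = g * CoprodI.of x * CoprodI.of x' by
      rw [map_mul, mul_assoc]]
  group

lemma cc_Hinv (α : ι) (h k : CoprodI Gf) (hh : h ∈ H) (x : Gf α) :
    cc ks α₀ ψ ζ α (h * k) x = cc ks α₀ ψ ζ α k x := by
  unfold cc pw
  have e1 : ks.t α (h * k) = ks.t α k := ks.t_const α k h hh
  have easc : h * k * CoprodI.of x = h * (k * CoprodI.of x) := mul_assoc _ _ _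
  have e2 : ks.t α (h * k * CoprodI.of x) = ks.t α (k * CoprodI.of x) := by
    rw [easc]; exact ks.t_const α _ h hh
  have e3 : uu ks α (h * k) = uu ks α k := Subtype.ext (ks.d_mul_left α k h hh)
  have e4 : th ks α₀ ζ α (h * k) = th ks α₀ ζ α k := th_mul_left ks α₀ ζ α k h hh
  have e5 : th ks α₀ ζ α (h * k * CoprodI.of x) = th ks α₀ ζ α (k * CoprodI.of x) := by
    rw [easc]; exact th_mul_left ks α₀ ζ α _ h hh
  rw [e4, e5, psi_congr ks ψ e3
    (b := ⟨ks.t α k * CoprodI.of x * (ks.t α (k * CoprodI.of x))⁻¹, ks.w_mem α k x⟩)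
    (by show ks.t α (h * k) * CoprodI.of x * (ks.t α (h * k * CoprodI.of x))⁻¹
          = ks.t α k * CoprodI.of x * (ks.t α (k * CoprodI.of x))⁻¹
        rw [e1, e2])]

noncomputable def homW (α : ι) : Gf α →* (CoprodI Gf → K) ⋊[rAct K] CoprodI Gf where
  toFun x := ⟨fun k => cc ks α₀ ψ ζ α k x, CoprodI.of x⟩
  map_one' := by
    refine SemidirectProduct.ext ?_ ?_
    · funext k
      exact cc_one ks α₀ ψ ζ α k
    · exact map_one _
  map_mul' x x' := by
    refine SemidirectProduct.ext ?_ ?_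
    · funext k
      rw [SemidirectProduct.mul_left, Pi.mul_apply]
      exact cc_mul ks α₀ ψ ζ α k x x'
    · rw [SemidirectProduct.mul_right]
      exact map_mul CoprodI.of x x'

noncomputable def bigPsi : CoprodI Gf →* (CoprodI Gf → K) ⋊[rAct K] CoprodI Gf :=
  CoprodI.lift (fun α => homW ks α₀ ψ ζ α)

lemma bigPsi_of (α : ι) (x : Gf α) :
    bigPsi ks α₀ ψ ζ (CoprodI.of x) = ⟨fun k => cc ks α₀ ψ ζ α k x, CoprodI.of x⟩ :=
  CoprodI.lift_of _ _

lemma bigPsi_right (g : CoprodI Gf) : (bigPsi ks α₀ ψ ζ g).right = g := by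
  have h : (SemidirectProduct.rightHom.comp (bigPsi ks α₀ ψ ζ)) = MonoidHom.id _ := by
    apply CoprodI.ext_hom
    intro i
    ext x
    show SemidirectProduct.rightHom (bigPsi ks α₀ ψ ζ (CoprodI.of x)) = CoprodI.of x
    rw [bigPsi_of]
    rfl
  show SemidirectProduct.rightHom (bigPsi ks α₀ ψ ζ g) = g
  rw [show SemidirectProduct.rightHom (bigPsi ks α₀ ψ ζ g)
    = (SemidirectProduct.rightHom.comp (bigPsi ks α₀ ψ ζ)) g from rfl, h]
  rfl

noncomputable def Ff (g k : CoprodI Gf) : K := (bigPsi ks α₀ ψ ζ g).left k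

lemma Ff_mul (g g' k : CoprodI Gf) :
    Ff ks α₀ ψ ζ (g * g') k = Ff ks α₀ ψ ζ g k * Ff ks α₀ ψ ζ g' (k * g) := by
  unfold Ff
  rw [map_mul, SemidirectProduct.mul_left, Pi.mul_apply]
  rw [show rAct K (bigPsi ks α₀ ψ ζ g).right (bigPsi ks α₀ ψ ζ g').left k
    = (bigPsi ks α₀ ψ ζ g').left (k * (bigPsi ks α₀ ψ ζ g).right) from rfl]
  rw [bigPsi_right]

lemma Ff_one (k : CoprodI Gf) : Ff ks α₀ ψ ζ 1 k = 1 := by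
  unfold Ff
  rw [map_one]
  rfl

lemma Ff_of (α : ι) (x : Gf α) (k : CoprodI Gf) :
    Ff ks α₀ ψ ζ (CoprodI.of x) k = cc ks α₀ ψ ζ α k x := by
  unfold Ff
  rw [bigPsi_of]

lemma Ff_inv (g k : CoprodI Gf) :
    Ff ks α₀ ψ ζ g⁻¹ k = (Ff ks α₀ ψ ζ g (k * g⁻¹))⁻¹ := by
  have h := Ff_mul ks α₀ ψ ζ g⁻¹ g k
  rw [show g⁻¹ * g = 1 by group, Ff_one] at h
  exact eq_inv_of_mul_eq_one_left h.symm

lemma Ff_Hinv (g : CoprodI Gf) (h : CoprodI Gf) (hh : h ∈ H) (k : CoprodI Gf) :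
    Ff ks α₀ ψ ζ g (h * k) = Ff ks α₀ ψ ζ g k := by
  set S : Subgroup ((CoprodI Gf → K) ⋊[rAct K] CoprodI Gf) :=
    { carrier := {w | ∀ h' ∈ H, ∀ k', w.left (h' * k') = w.left k'}
      one_mem' := fun h' _ k' => rfl
      mul_mem' := by
        intro a b ha hb h' hh' k'
        rw [SemidirectProduct.mul_left, Pi.mul_apply, Pi.mul_apply]
        rw [ha h' hh' k']
        congr 1
        show b.left ((h' * k') * a.right) = b.left (k' * a.right)
        rw [mul_assoc]
        exact hb h' hh' _
      inv_mem' := by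
        intro a ha h' hh' k'
        rw [SemidirectProduct.inv_left]
        show (a.left ((h' * k') * a.right⁻¹))⁻¹ = (a.left (k' * a.right⁻¹))⁻¹
        rw [mul_assoc, ha h' hh' _] } with hSdef
  have hS : ∀ g, bigPsi ks α₀ ψ ζ g ∈ S := by
    intro g
    induction g using CoprodI.induction_on with
    | one => rw [map_one]; exact one_mem S
    | of i x =>
      rw [bigPsi_of]
      intro h' hh' k'
      exact cc_Hinv ks α₀ ψ ζ i h' k' hh' x
    | mul a b hA hB => rw [map_mul]; exact mul_mem hA hB
  exact hS g h hh k

/-- the candidate homomorphism `H →* K` -/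
noncomputable def gam : H →* K where
  toFun h := Ff ks α₀ ψ ζ (h : CoprodI Gf) 1
  map_one' := Ff_one ks α₀ ψ ζ 1
  map_mul' a b := by
    show Ff ks α₀ ψ ζ ((a : CoprodI Gf) * (b : CoprodI Gf)) 1 = _
    rw [Ff_mul, one_mul]
    congr 1
    rw [show (a : CoprodI Gf) = (a : CoprodI Gf) * 1 by rw [mul_one],
      Ff_Hinv ks α₀ ψ ζ (b : CoprodI Gf) (a : CoprodI Gf) a.2 1]

end Construction

section Master

open KuroshSystem

variable {K : Type} [Group K]
variable {H : Subgroup (CoprodI Gf)} (ks : KuroshSystem Gf H) (α₀ : ι)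
  (ψ : ∀ (α : ι) (u : Set.range (ks.d α)),
      ↥(((CoprodI.of : Gf α →* CoprodI Gf).range.map
            (MulAut.conj (u : CoprodI Gf)).toMonoidHom) ⊓ H) →* K)
  (ζ : {z : CoprodI Gf //
      z ≠ 1 ∧ ∃ (α : ι) (g : CoprodI Gf), z = ks.t α g * (ks.t α₀ g)⁻¹} → K)

lemma F_t_step (n : ℕ)
    (ih : ∀ m, m < n → ∀ v : CoprodI Gf, syl Gf v = m → (∃ δ, ks.t δ v = v) →
      Ff ks α₀ ψ ζ v 1 = zeta' ks α₀ ζ (v * (ks.t α₀ v)⁻¹))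
    (ε : ι) (s : CoprodI Gf) (x' : Gf ε) (hx' : x' ≠ 1)
    (hts : ks.t ε s = s) (hsd : s = ks.d ε s * CoprodI.of x') (hn : syl Gf s = n) :
    Ff ks α₀ ψ ζ s 1 = zeta' ks α₀ ζ (s * (ks.t α₀ s)⁻¹) := by
  set v := ks.d ε s with hv
  have hs' : v * CoprodI.of x' = s := by rw [hv]; exact hsd.symm
  have hvne : lastSyl Gf v ≠ some ε := ks.d_not_end ε s
  have hsyl : syl Gf s = syl Gf v + 1 := by
    conv_lhs => rw [hsd]
    exact syl_mul_of hx' hvne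
  have htv : ks.t ε v = v := ks.ax_i ε s
  have hFv : Ff ks α₀ ψ ζ v 1 = zeta' ks α₀ ζ (v * (ks.t α₀ v)⁻¹) :=
    ih (syl Gf v) (by omega) v rfl ⟨ε, htv⟩
  have hF : Ff ks α₀ ψ ζ s 1 = Ff ks α₀ ψ ζ v 1 * cc ks α₀ ψ ζ ε v x' := by
    conv_lhs => rw [hsd]
    rw [Ff_mul, Ff_of ks α₀ ψ ζ ε x' (1 * v), one_mul]
  have htvx : ks.t ε (v * CoprodI.of x') = v * CoprodI.of x' := by
    rw [hs']; exact hts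
  have hpw : pw ks ψ ε v x' = 1 := by
    unfold pw
    have h1 : (⟨ks.t ε v * CoprodI.of x' * (ks.t ε (v * CoprodI.of x'))⁻¹, ks.w_mem ε v x'⟩ :
        ↥(((CoprodI.of : Gf ε →* CoprodI Gf).range.map
          (MulAut.conj ((uu ks ε v : Set.range (ks.d ε)) : CoprodI Gf)).toMonoidHom) ⊓ H)) = 1 := by
      apply Subtype.ext
      show ks.t ε v * CoprodI.of x' * (ks.t ε (v * CoprodI.of x'))⁻¹ = 1
      rw [htv, htvx]
      group
    rw [h1, map_one]
  have hth : th ks α₀ ζ ε v = Ff ks α₀ ψ ζ v 1 := by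
    unfold th
    rw [htv]
    exact hFv.symm
  have hth2 : th ks α₀ ζ ε (v * CoprodI.of x') = zeta' ks α₀ ζ (s * (ks.t α₀ s)⁻¹) := by
    unfold th
    rw [htvx, hs']
  rw [hF]
  unfold cc
  rw [hpw, hth, hth2]
  group

lemma F_t : ∀ (n : ℕ) (s : CoprodI Gf), syl Gf s = n → (∃ δ, ks.t δ s = s) →
    Ff ks α₀ ψ ζ s 1 = zeta' ks α₀ ζ (s * (ks.t α₀ s)⁻¹) := by
  intro n
  induction n using Nat.strong_induction_on with
  | _ n ih =>
    intro s hn hδ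
    obtain ⟨δ, hδ⟩ := hδ
    obtain ⟨x', htd⟩ := ks.t_eq_d_mul δ s
    have hsd : s = ks.d δ s * CoprodI.of x' := hδ.symm.trans htd
    by_cases hx' : x' = 1
    · subst hx'
      rw [map_one, mul_one] at hsd
      by_cases hs1 : s = 1
      · subst hs1
        rw [Ff_one]
        have h0 : ks.t α₀ (1 : CoprodI Gf) = 1 := ks.t_one α₀ 1 (one_mem H)
        rw [h0, inv_one, mul_one, zeta'_one]
      · rcases ks.ax_ii δ s with h1 | ⟨β, hβδ, hlast⟩
        · rw [← hsd] at h1; exact absurd h1 hs1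
        · have hdne : ks.d δ s ≠ 1 := by rw [← hsd]; exact hs1
          have htβ : ks.t β s = s := by
            have h2 := ks.ax_iv δ s β hdne hlast
            rw [← hsd] at h2
            exact h2
          obtain ⟨x₁, htd1⟩ := ks.t_eq_d_mul β s
          have hsd1 : s = ks.d β s * CoprodI.of x₁ := htβ.symm.trans htd1
          by_cases hx₁ : x₁ = 1
          · subst hx₁
            rw [map_one, mul_one] at hsd1
            have h3 := ks.d_not_end β s
            rw [← hsd1] at h3
            rw [← hsd] at hlast
            exact absurd hlast h3
          · exact F_t_step ks α₀ ψ ζ n ih β s x₁ hx₁ htβ hsd1 hn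
    · exact F_t_step ks α₀ ψ ζ n ih δ s x' hx' hδ hsd hn

end Master

section Final

open KuroshSystem

variable {K : Type} [Group K]
variable {H : Subgroup (CoprodI Gf)} (ks : KuroshSystem Gf H) (α₀ : ι)
  (ψ : ∀ (α : ι) (u : Set.range (ks.d α)),
      ↥(((CoprodI.of : Gf α →* CoprodI Gf).range.map
            (MulAut.conj (u : CoprodI Gf)).toMonoidHom) ⊓ H) →* K)
  (ζ : {z : CoprodI Gf //
      z ≠ 1 ∧ ∃ (α : ι) (g : CoprodI Gf), z = ks.t α g * (ks.t α₀ g)⁻¹} → K)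

lemma zeta'_eq (z : CoprodI Gf)
    (hz : z ≠ 1 ∧ ∃ (α : ι) (g : CoprodI Gf), z = ks.t α g * (ks.t α₀ g)⁻¹) :
    zeta' ks α₀ ζ z = ζ ⟨z, hz⟩ := by
  unfold zeta'
  rw [dif_pos hz]

lemma gam_apply (hv : CoprodI Gf) (hm : hv ∈ H) :
    gam ks α₀ ψ ζ ⟨hv, hm⟩ = Ff ks α₀ ψ ζ hv 1 := rfl

lemma gam_z
    (hZ : ∀ z : CoprodI Gf,
      (z ≠ 1 ∧ ∃ (α : ι) (g : CoprodI Gf), z = ks.t α g * (ks.t α₀ g)⁻¹) → z ∈ H)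
    (z : {z : CoprodI Gf //
      z ≠ 1 ∧ ∃ (α : ι) (g : CoprodI Gf), z = ks.t α g * (ks.t α₀ g)⁻¹}) :
    gam ks α₀ ψ ζ ⟨(z : CoprodI Gf), hZ z z.2⟩ = ζ z := by
  obtain ⟨zv, hzz⟩ := z
  obtain ⟨hne, α, g, hzeq⟩ := hzz
  subst hzeq
  rw [gam_apply]
  have hHz : ks.t α g * (ks.t α₀ g)⁻¹ ∈ H := hZ _ ⟨hne, α, g, rfl⟩
  rw [Ff_mul, one_mul, Ff_inv]
  have e0 := Ff_Hinv ks α₀ ψ ζ (ks.t α₀ g) _ hHz 1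
  rw [mul_one] at e0
  rw [e0]
  have e1 : Ff ks α₀ ψ ζ (ks.t α g) 1 = zeta' ks α₀ ζ (ks.t α g * (ks.t α₀ g)⁻¹) := by
    have h1 := F_t ks α₀ ψ ζ (syl Gf (ks.t α g)) (ks.t α g) rfl ⟨α, ks.t_idem α g⟩
    rwa [ks.t_t α₀ α g] at h1
  have e2 : Ff ks α₀ ψ ζ (ks.t α₀ g) 1 = 1 := by
    have h2 := F_t ks α₀ ψ ζ (syl Gf (ks.t α₀ g)) (ks.t α₀ g) rfl ⟨α₀, ks.t_idem α₀ g⟩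
    rw [ks.t_t α₀ α₀ g] at h2
    rw [h2, show ks.t α₀ g * (ks.t α₀ g)⁻¹ = 1 by group, zeta'_one]
  rw [e1, e2, inv_one, mul_one, zeta'_eq ks α₀ ζ _ ⟨hne, α, g, rfl⟩]

lemma gam_psi (α : ι) (u : Set.range (ks.d α))
    (h : ↥(((CoprodI.of : Gf α →* CoprodI Gf).range.map
          (MulAut.conj (u : CoprodI Gf)).toMonoidHom) ⊓ H)) :
    gam ks α₀ ψ ζ ⟨(h : CoprodI Gf), (Subgroup.mem_inf.mp h.2).2⟩ = ψ α u h := by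
  obtain ⟨u₁, g₀, hg₀⟩ := u
  subst hg₀
  have hH : (h : CoprodI Gf) ∈ H := (Subgroup.mem_inf.mp h.2).2
  obtain ⟨y, hy, hconj⟩ := (Subgroup.mem_inf.mp h.2).1
  obtain ⟨x, rfl⟩ := MonoidHom.mem_range.mp hy
  have hval : (h : CoprodI Gf) = ks.d α g₀ * CoprodI.of x * (ks.d α g₀)⁻¹ := by
    rw [← hconj]; rfl
  have hd : ks.d α (ks.d α g₀) = ks.d α g₀ := ks.d_idem α g₀
  have ht : ks.t α (ks.d α g₀) = ks.d α g₀ := ks.ax_i α g₀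
  have hcomm : ks.d α g₀ * CoprodI.of x = (h : CoprodI Gf) * ks.d α g₀ := by
    rw [hval]; group
  have htx : ks.t α (ks.d α g₀ * CoprodI.of x) = ks.d α g₀ := by
    rw [hcomm, ks.t_const α _ _ hH, ht]
  have ht0x : ks.t α₀ (ks.d α g₀ * CoprodI.of x) = ks.t α₀ (ks.d α g₀) := by
    rw [hcomm, ks.t_const α₀ _ _ hH]
  rw [gam_apply]
  have eH : Ff ks α₀ ψ ζ (ks.d α g₀) (ks.d α g₀ * CoprodI.of x * (ks.d α g₀)⁻¹)
      = Ff ks α₀ ψ ζ (ks.d α g₀) 1 := by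
    have e := Ff_Hinv ks α₀ ψ ζ (ks.d α g₀) _ (hval ▸ hH) 1
    rwa [mul_one] at e
  rw [hval, Ff_mul, one_mul, Ff_inv, eH, Ff_mul, one_mul, Ff_of ks α₀ ψ ζ α x (ks.d α g₀)]
  unfold cc
  have epw : pw ks ψ α (ks.d α g₀) x = ψ α ⟨ks.d α g₀, ⟨g₀, rfl⟩⟩ h := by
    unfold pw
    refine psi_congr ks ψ (Subtype.ext hd) ?_
    show ks.t α (ks.d α g₀) * CoprodI.of x * (ks.t α (ks.d α g₀ * CoprodI.of x))⁻¹
        = (h : CoprodI Gf)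
    rw [ht, htx, ← hval]
  have eth1 : th ks α₀ ζ α (ks.d α g₀)
      = zeta' ks α₀ ζ (ks.d α g₀ * (ks.t α₀ (ks.d α g₀))⁻¹) := by
    unfold th; rw [ht]
  have eth2 : th ks α₀ ζ α (ks.d α g₀ * CoprodI.of x)
      = zeta' ks α₀ ζ (ks.d α g₀ * (ks.t α₀ (ks.d α g₀))⁻¹) := by
    unfold th; rw [htx, ht0x]
  have eF : Ff ks α₀ ψ ζ (ks.d α g₀) 1
      = zeta' ks α₀ ζ (ks.d α g₀ * (ks.t α₀ (ks.d α g₀))⁻¹) :=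
    F_t ks α₀ ψ ζ (syl Gf (ks.d α g₀)) (ks.d α g₀) rfl ⟨α, ht⟩
  rw [epw, eth1, eth2, eF]
  group

end Final

section Unique

open KuroshSystem

variable {K : Type} [Group K]
variable {H : Subgroup (CoprodI Gf)} (ks : KuroshSystem Gf H) (α₀ : ι)
  (ψ : ∀ (α : ι) (u : Set.range (ks.d α)),
      ↥(((CoprodI.of : Gf α →* CoprodI Gf).range.map
            (MulAut.conj (u : CoprodI Gf)).toMonoidHom) ⊓ H) →* K)
  (ζ : {z : CoprodI Gf //
      z ≠ 1 ∧ ∃ (α : ι) (g : CoprodI Gf), z = ks.t α g * (ks.t α₀ g)⁻¹} → K)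

lemma memz (hZ : ∀ z : CoprodI Gf,
      (z ≠ 1 ∧ ∃ (α : ι) (g : CoprodI Gf), z = ks.t α g * (ks.t α₀ g)⁻¹) → z ∈ H)
    (β : ι) (g : CoprodI Gf) : ks.t β g * (ks.t α₀ g)⁻¹ ∈ H := by
  by_cases h1 : ks.t β g * (ks.t α₀ g)⁻¹ = 1
  · rw [h1]; exact one_mem H
  · exact hZ _ ⟨h1, β, g, rfl⟩

lemma hom_unique
    (hZ : ∀ z : CoprodI Gf,
      (z ≠ 1 ∧ ∃ (α : ι) (g : CoprodI Gf), z = ks.t α g * (ks.t α₀ g)⁻¹) → z ∈ H)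
    (γ₁ γ₂ : H →* K)
    (hψ₁ : ∀ (α : ι) (u : Set.range (ks.d α))
        (h : ↥(((CoprodI.of : Gf α →* CoprodI Gf).range.map
          (MulAut.conj (u : CoprodI Gf)).toMonoidHom) ⊓ H)),
        γ₁ ⟨(h : CoprodI Gf), (Subgroup.mem_inf.mp h.2).2⟩ = ψ α u h)
    (hζ₁ : ∀ z : {z : CoprodI Gf //
        z ≠ 1 ∧ ∃ (α : ι) (g : CoprodI Gf), z = ks.t α g * (ks.t α₀ g)⁻¹},
        γ₁ ⟨(z : CoprodI Gf), hZ z z.2⟩ = ζ z)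
    (hψ₂ : ∀ (α : ι) (u : Set.range (ks.d α))
        (h : ↥(((CoprodI.of : Gf α →* CoprodI Gf).range.map
          (MulAut.conj (u : CoprodI Gf)).toMonoidHom) ⊓ H)),
        γ₂ ⟨(h : CoprodI Gf), (Subgroup.mem_inf.mp h.2).2⟩ = ψ α u h)
    (hζ₂ : ∀ z : {z : CoprodI Gf //
        z ≠ 1 ∧ ∃ (α : ι) (g : CoprodI Gf), z = ks.t α g * (ks.t α₀ g)⁻¹},
        γ₂ ⟨(z : CoprodI Gf), hZ z z.2⟩ = ζ z) :
    γ₁ = γ₂ := by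
  have ez : ∀ (β : ι) (k : CoprodI Gf),
      γ₁ ⟨ks.t β k * (ks.t α₀ k)⁻¹, memz ks α₀ hZ β k⟩
        = γ₂ ⟨ks.t β k * (ks.t α₀ k)⁻¹, memz ks α₀ hZ β k⟩ := by
    intro β k
    by_cases h1 : ks.t β k * (ks.t α₀ k)⁻¹ = 1
    · have h2 : (⟨ks.t β k * (ks.t α₀ k)⁻¹, memz ks α₀ hZ β k⟩ : H) = 1 := Subtype.ext h1
      rw [h2, map_one, map_one]
    · have hzz : (ks.t β k * (ks.t α₀ k)⁻¹ ≠ 1 ∧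
          ∃ (α : ι) (g : CoprodI Gf),
            ks.t β k * (ks.t α₀ k)⁻¹ = ks.t α g * (ks.t α₀ g)⁻¹) := ⟨h1, β, k, rfl⟩
      have r1 := hζ₁ ⟨_, hzz⟩
      have r2 := hζ₂ ⟨_, hzz⟩
      have c1 : γ₁ ⟨ks.t β k * (ks.t α₀ k)⁻¹, memz ks α₀ hZ β k⟩ = ζ ⟨_, hzz⟩ := by
        rw [← r1]; try exact congrArg γ₁ (Subtype.ext rfl)
      have c2 : γ₂ ⟨ks.t β k * (ks.t α₀ k)⁻¹, memz ks α₀ hZ β k⟩ = ζ ⟨_, hzz⟩ := by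
        rw [← r2]; try exact congrArg γ₂ (Subtype.ext rfl)
      rw [c1, c2]
  have main : ∀ (n : ℕ) (g : CoprodI Gf), syl Gf g = n →
      γ₁ ⟨g * (ks.t α₀ g)⁻¹, ks.t_coset α₀ g⟩
        = γ₂ ⟨g * (ks.t α₀ g)⁻¹, ks.t_coset α₀ g⟩ := by
    intro n
    induction n using Nat.strong_induction_on with
    | _ n ih =>
      intro g hn
      by_cases hg1 : g = 1
      · subst hg1
        have h0 : (⟨(1 : CoprodI Gf) * (ks.t α₀ 1)⁻¹, ks.t_coset α₀ 1⟩ : H) = 1 := by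
          apply Subtype.ext
          show (1 : CoprodI Gf) * (ks.t α₀ 1)⁻¹ = 1
          rw [ks.t_one α₀ 1 (one_mem H)]; group
        rw [h0, map_one, map_one]
      · obtain ⟨β, x, g', hdec, hlen⟩ := exists_decomp hg1
        have hGeq : (⟨g * (ks.t α₀ g)⁻¹, ks.t_coset α₀ g⟩ : H)
            = (⟨g' * (ks.t α₀ g')⁻¹, ks.t_coset α₀ g'⟩ : H)
              * (⟨ks.t β g' * (ks.t α₀ g')⁻¹, memz ks α₀ hZ β g'⟩ : H)⁻¹
              * (⟨ks.t β g' * CoprodI.of x * (ks.t β (g' * CoprodI.of x))⁻¹,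
                  ks.w_memH β g' x⟩ : H)
              * (⟨ks.t β (g' * CoprodI.of x) * (ks.t α₀ (g' * CoprodI.of x))⁻¹,
                  memz ks α₀ hZ β (g' * CoprodI.of x)⟩ : H) := by
          apply Subtype.ext
          show g * (ks.t α₀ g)⁻¹
              = (g' * (ks.t α₀ g')⁻¹) * (ks.t β g' * (ks.t α₀ g')⁻¹)⁻¹
                * (ks.t β g' * CoprodI.of x * (ks.t β (g' * CoprodI.of x))⁻¹)
                * (ks.t β (g' * CoprodI.of x) * (ks.t α₀ (g' * CoprodI.of x))⁻¹)
          rw [hdec]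
          group
        rw [hGeq, map_mul, map_mul, map_mul, map_inv]
        have e1 := ih (syl Gf g') (by omega) g' rfl
        have e2 := ez β g'
        have e4 := ez β (g' * CoprodI.of x)
        have e3 : γ₁ (⟨ks.t β g' * CoprodI.of x * (ks.t β (g' * CoprodI.of x))⁻¹,
              ks.w_memH β g' x⟩ : H)
            = γ₂ (⟨ks.t β g' * CoprodI.of x * (ks.t β (g' * CoprodI.of x))⁻¹,
              ks.w_memH β g' x⟩ : H) := by
          have r1 := hψ₁ β (uu ks β g')
            ⟨ks.t β g' * CoprodI.of x * (ks.t β (g' * CoprodI.of x))⁻¹, ks.w_mem β g' x⟩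
          have r2 := hψ₂ β (uu ks β g')
            ⟨ks.t β g' * CoprodI.of x * (ks.t β (g' * CoprodI.of x))⁻¹, ks.w_mem β g' x⟩
          have c1 : γ₁ (⟨ks.t β g' * CoprodI.of x * (ks.t β (g' * CoprodI.of x))⁻¹,
              ks.w_memH β g' x⟩ : H) = ψ β (uu ks β g')
                ⟨ks.t β g' * CoprodI.of x * (ks.t β (g' * CoprodI.of x))⁻¹,
                  ks.w_mem β g' x⟩ := by
            rw [← r1]; try exact congrArg γ₁ (Subtype.ext rfl)
          have c2 : γ₂ (⟨ks.t β g' * CoprodI.of x * (ks.t β (g' * CoprodI.of x))⁻¹,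
              ks.w_memH β g' x⟩ : H) = ψ β (uu ks β g')
                ⟨ks.t β g' * CoprodI.of x * (ks.t β (g' * CoprodI.of x))⁻¹,
                  ks.w_mem β g' x⟩ := by
            rw [← r2]; try exact congrArg γ₂ (Subtype.ext rfl)
          rw [c1, c2]
        rw [e1, e2, e3, e4, map_mul, map_mul, map_mul, map_inv]
  apply MonoidHom.ext
  intro h
  have hm := main (syl Gf (h : CoprodI Gf)) (h : CoprodI Gf) rfl
  have hh : (⟨(h : CoprodI Gf) * (ks.t α₀ (h : CoprodI Gf))⁻¹,
      ks.t_coset α₀ (h : CoprodI Gf)⟩ : H) = h := by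
    apply Subtype.ext
    show (h : CoprodI Gf) * (ks.t α₀ (h : CoprodI Gf))⁻¹ = (h : CoprodI Gf)
    rw [ks.t_one α₀ _ h.2]; group
  rwa [hh] at hm

end Unique

/-- Kurosh Subgroup Theorem: given a Kurosh system for `H ≤ G = ∗_α G_α` and
a fixed index `α₀`, with `z_{i,α} = α(H_i)·α₀(H_i)⁻¹` and `Z` the set of nontrivial such
elements, `H = ∗_α [∗_{u ∈ D_α} (uG_αu⁻¹ ∩ H)] ∗ F` where `F` is free with basis `Z`: every
family of homomorphisms `ψ_u : uG_αu⁻¹ ∩ H → K` (for `u ∈ D_α`, `α ∈ A`) together with any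
map `ζ : Z → K` extends uniquely to a homomorphism `H → K`. -/
theorem kurosh_subgroup_theorem {ι : Type} [DecidableEq ι] (Gf : ι → Type)
    [∀ i, Group (Gf i)] [∀ i, DecidableEq (Gf i)] (H : Subgroup (CoprodI Gf))
    (ks : KuroshSystem Gf H) (α₀ : ι)
    (hZ : ∀ z : CoprodI Gf,
      (z ≠ 1 ∧ ∃ (α : ι) (g : CoprodI Gf), z = ks.t α g * (ks.t α₀ g)⁻¹) → z ∈ H)
    (K : Type) [Group K]
    (ψ : ∀ (α : ι) (u : Set.range (ks.d α)),
      ↥(((CoprodI.of : Gf α →* CoprodI Gf).range.map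
            (MulAut.conj (u : CoprodI Gf)).toMonoidHom) ⊓ H) →* K)
    (ζ : {z : CoprodI Gf //
      z ≠ 1 ∧ ∃ (α : ι) (g : CoprodI Gf), z = ks.t α g * (ks.t α₀ g)⁻¹} → K) :
    ∃! γ : H →* K,
      (∀ (α : ι) (u : Set.range (ks.d α))
          (h : ↥(((CoprodI.of : Gf α →* CoprodI Gf).range.map
            (MulAut.conj (u : CoprodI Gf)).toMonoidHom) ⊓ H)),
        γ ⟨(h : CoprodI Gf), (Subgroup.mem_inf.mp h.2).2⟩ = ψ α u h) ∧
      (∀ z : {z : CoprodI Gf //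
          z ≠ 1 ∧ ∃ (α : ι) (g : CoprodI Gf), z = ks.t α g * (ks.t α₀ g)⁻¹},
        γ ⟨(z : CoprodI Gf), hZ z z.2⟩ = ζ z) := by
  refine ⟨gam ks α₀ ψ ζ, ⟨fun α u h => gam_psi ks α₀ ψ ζ α u h,
    fun z => gam_z ks α₀ ψ ζ hZ z⟩, ?_⟩
  rintro γ' ⟨hp1, hp2⟩
  exact hom_unique ks α₀ ψ ζ hZ γ' (gam ks α₀ ψ ζ) hp1 hp2
    (fun α u h => gam_psi ks α₀ ψ ζ α u h) (fun z => gam_z ks α₀ ψ ζ hZ z)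
end
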